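/- arXiv:1308.2571 — 5 statements merged into one kernel-verified Lean document; each statement's English description precedes it below -/
import Mathlib

section
/- Let n ≥ 3 and suppose Φ : 𝒦^n → 𝒦^n is a Minkowski valuation which is SL(n) equivariant and homogeneous of degree r. Then Φ K ⊆ span K for every K ∈ 𝒦^n, where span K denotes the linear hull of K. -/
open scoped RealInnerProductSpace Pointwise NNReal
open MeasureTheory

noncomputable section

/-- `ℝⁿ` with its Euclidean structure. -/
abbrev Euc (n : ℕ) := EuclideanSpace ℝ (Fin n)

variable {n : ℕ}

/-- The image of a convex body under a linear map (automatically continuous,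
since we are in finite dimensions). -/
def mapBody (φ : Euc n →ₗ[ℝ] Euc n) (K : ConvexBody (Euc n)) : ConvexBody (Euc n) :=
  ⟨φ '' (K : Set (Euc n)), K.convex.linear_image φ,
    K.isCompact.image φ.continuous_of_finiteDimensional, K.nonempty.image φ⟩

/-- The support function `h(K, x) = max {⟪x, y⟫ : y ∈ K}` of a convex body. -/
def supp (K : ConvexBody (Euc n)) (x : Euc n) : ℝ :=
  sSup ((fun y => ⟪x, y⟫) '' (K : Set (Euc n)))

lemma isCompact_convexHull_insert_zero (K : ConvexBody (Euc n)) :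
    IsCompact (convexHull ℝ (insert (0 : Euc n) (K : Set (Euc n)))) := by
  have h : convexHull ℝ (insert (0 : Euc n) (K : Set (Euc n)))
      = (fun p : ℝ × Euc n => p.1 • p.2) '' (Set.Icc (0 : ℝ) 1 ×ˢ (K : Set (Euc n))) := by
    rw [convexHull_insert K.nonempty, K.convex.convexHull_eq]
    ext y
    constructor
    · intro hy
      rw [mem_convexJoin] at hy
      obtain ⟨a, ha, b, hb, hy⟩ := hy
      rw [Set.mem_singleton_iff] at ha
      subst ha
      rw [segment_eq_image ℝ (0 : Euc n) b] at hy
      obtain ⟨θ, hθ, rfl⟩ := hy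
      exact ⟨(θ, b), Set.mem_prod.mpr ⟨hθ, hb⟩, by simp⟩
    · rintro ⟨⟨θ, z⟩, hmem, rfl⟩
      obtain ⟨hθ, hz⟩ := Set.mem_prod.mp hmem
      rw [mem_convexJoin]
      refine ⟨0, rfl, z, hz, ?_⟩
      rw [segment_eq_image ℝ (0 : Euc n) z]
      exact ⟨θ, hθ, by simp⟩
  rw [h]
  exact (isCompact_Icc.prod K.isCompact).image (continuous_fst.smul continuous_snd)

/-- `K_o`, the convex hull of `K` and the origin. -/
def bodyO (K : ConvexBody (Euc n)) : ConvexBody (Euc n) :=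
  ⟨convexHull ℝ (insert (0 : Euc n) (K : Set (Euc n))), convex_convexHull ℝ _,
    isCompact_convexHull_insert_zero K,
    ⟨0, subset_convexHull ℝ _ (Set.mem_insert 0 _)⟩⟩

/-- The moment vector `m(K) = ∫_K x dx`. -/
def momentVec (K : ConvexBody (Euc n)) : Euc n := ∫ y in (K : Set (Euc n)), y

/-- The support function of the moment body, `h(M K, x) = ∫_K |⟪x, y⟫| dy`. -/
def momentSupp (K : ConvexBody (Euc n)) (x : Euc n) : ℝ :=
  ∫ y in (K : Set (Euc n)), |⟪x, y⟫|

/-- `m_*(K) = ∫_{K_o ∖ K} x dx`. -/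
def momentVecStar (K : ConvexBody (Euc n)) : Euc n :=
  ∫ y in ((bodyO K : Set (Euc n)) \ (K : Set (Euc n))), y

/-- The support function of `M_* K`, `h(M_* K, x) = ∫_{K_o ∖ K} |⟪x, y⟫| dy`. -/
def momentSuppStar (K : ConvexBody (Euc n)) (x : Euc n) : ℝ :=
  ∫ y in ((bodyO K : Set (Euc n)) \ (K : Set (Euc n))), |⟪x, y⟫|

/-- `Φ` is a Minkowski valuation: `Φ K + Φ L = Φ (K ∪ L) + Φ (K ∩ L)` whenever
`K ∪ L` (and hence `K ∩ L`) is a convex body. -/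
def IsMinkowskiValuation (Φ : ConvexBody (Euc n) → ConvexBody (Euc n)) : Prop :=
  ∀ K L M N : ConvexBody (Euc n),
    (M : Set (Euc n)) = (K : Set (Euc n)) ∪ (L : Set (Euc n)) →
    (N : Set (Euc n)) = (K : Set (Euc n)) ∩ (L : Set (Euc n)) →
    Φ K + Φ L = Φ M + Φ N

/-- `Φ` is `GL(n)` equivariant: `Φ(φ K) = |det φ|^q • φ (Φ K)` for some fixed `q ∈ ℝ`. -/
def IsGLEquivariant (Φ : ConvexBody (Euc n) → ConvexBody (Euc n)) : Prop :=
  ∃ q : ℝ, ∀ (φ : Euc n ≃ₗ[ℝ] Euc n) (K : ConvexBody (Euc n)),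
    Φ (mapBody (φ : Euc n →ₗ[ℝ] Euc n) K)
      = |LinearMap.det (φ : Euc n →ₗ[ℝ] Euc n)| ^ (q : ℝ)
          • mapBody (φ : Euc n →ₗ[ℝ] Euc n) (Φ K)

/-- `Φ` is `SL(n)` equivariant: `Φ(φ K) = φ (Φ K)` for all `φ` with `det φ = 1`. -/
def IsSLEquivariant (Φ : ConvexBody (Euc n) → ConvexBody (Euc n)) : Prop :=
  ∀ φ : Euc n ≃ₗ[ℝ] Euc n, LinearMap.det (φ : Euc n →ₗ[ℝ] Euc n) = 1 →
    ∀ K : ConvexBody (Euc n),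
      Φ (mapBody (φ : Euc n →ₗ[ℝ] Euc n) K) = mapBody (φ : Euc n →ₗ[ℝ] Euc n) (Φ K)

/-- `Φ` is (positively) homogeneous of degree `r`. -/
def IsHomogeneousOfDegree (Φ : ConvexBody (Euc n) → ConvexBody (Euc n)) (r : ℝ) : Prop :=
  ∀ c : ℝ, 0 < c → ∀ K : ConvexBody (Euc n), Φ (c • K) = (c ^ r) • Φ K



section Aux

variable {n : ℕ}

/-- Determinant of a shear `y ↦ y + c • f y • v` with `f v = 0` is `1`. -/
lemma det_shear (f : Euc n →ₗ[ℝ] ℝ) (v : Euc n) (hfv : f v = 0) (c : ℝ) :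
    LinearMap.det (LinearMap.id + c • LinearMap.smulRight f v) = 1 := by
  classical
  set b : Module.Basis (Fin n) ℝ (Euc n) :=
    Module.Basis.ofEquivFun (WithLp.linearEquiv 2 ℝ (Fin n → ℝ)) with hb
  have hrepr : ∀ (y : Euc n) (i : Fin n), b.repr y i = y i := by
    intro y i; simp [hb, Module.Basis.ofEquivFun_repr_apply]
  have hmat : LinearMap.toMatrix b b (LinearMap.id + c • LinearMap.smulRight f v)
      = 1 + Matrix.replicateCol Unit (fun i => c * v i) * Matrix.replicateRow Unit (fun j => f (b j)) := by
    ext i j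
    rw [LinearMap.toMatrix_apply]
    rw [Matrix.add_apply, Matrix.one_apply]
    have hcr : (Matrix.replicateCol Unit (fun i => c * v i) * Matrix.replicateRow Unit (fun j => f (b j))) i j
        = (c * v i) * f (b j) := by
      simp [Matrix.mul_apply, Matrix.replicateCol, Matrix.replicateRow, Matrix.of_apply]
    rw [hcr, hrepr]
    have hbj : (b j) i = if i = j then 1 else 0 := by
      rw [← hrepr (b j) i, Module.Basis.repr_self]
      simp [Finsupp.single_apply, eq_comm]
    simp only [LinearMap.add_apply, LinearMap.id_apply, LinearMap.smul_apply,
      LinearMap.smulRight_apply, PiLp.add_apply, PiLp.smul_apply, smul_eq_mul]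
    rw [hbj]
    ring
  have hdot : dotProduct (fun j => f (b j)) (fun i => c * v i) = c * f v := by
    have hv : ∑ j, v j • b j = v := by
      have := b.sum_repr v
      simpa [hrepr] using this
    calc dotProduct (fun j => f (b j)) (fun i => c * v i)
        = ∑ j, f (b j) * (c * v j) := rfl
      _ = c * ∑ j, v j * f (b j) := by rw [Finset.mul_sum]; apply Finset.sum_congr rfl; intros; ring
      _ = c * f (∑ j, v j • b j) := by simp [map_sum, smul_eq_mul, mul_comm]
      _ = c * f v := by rw [hv]
  rw [← LinearMap.det_toMatrix b, hmat, Matrix.det_one_add_replicateCol_mul_replicateRow, hdot, hfv, mul_zero,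
    add_zero]

end Aux

/-- **Lemma 1 (i)**: `Φ K ⊆ span K`. -/
theorem minkowski_valuation_subset_span
    (n : ℕ) (hn : 3 ≤ n) (r : ℝ) (Φ : ConvexBody (Euc n) → ConvexBody (Euc n))
    (hval : IsMinkowskiValuation Φ) (hSL : IsSLEquivariant Φ)
    (hhom : IsHomogeneousOfDegree Φ r) :
    ∀ K : ConvexBody (Euc n),
      (Φ K : Set (Euc n)) ⊆ (Submodule.span ℝ (K : Set (Euc n)) : Set (Euc n)) := by
  intro K z hz
  by_contra hzE
  set E := Submodule.span ℝ (K : Set (Euc n)) with hE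
  -- a linear functional vanishing on E with f z = 1
  obtain ⟨f0, hf0z, hf0E⟩ := Submodule.exists_dual_map_eq_bot_of_notMem hzE inferInstance
  set f : Euc n →ₗ[ℝ] ℝ := (f0 z)⁻¹ • f0 with hf
  have hfz : f z = 1 := by simp [hf, inv_mul_cancel₀ hf0z]
  have hfE : ∀ y ∈ E, f y = 0 := by
    intro y hy
    have : f0 y ∈ E.map f0 := Submodule.mem_map_of_mem hy
    rw [hf0E] at this
    simp only [Submodule.mem_bot] at this
    simp [hf, this]
  -- a nonzero vector in the kernel of f
  have hker : LinearMap.ker f ≠ ⊥ := by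
    intro h
    have hinj : Function.Injective f := LinearMap.ker_eq_bot.mp h
    have h1 := LinearMap.finrank_le_finrank_of_injective hinj
    rw [finrank_euclideanSpace_fin, Module.finrank_self] at h1
    omega
  obtain ⟨v, hvker, hv0⟩ := (Submodule.ne_bot_iff _).mp hker
  have hfv : f v = 0 := hvker
  -- the shear maps
  set T : ℝ → (Euc n →ₗ[ℝ] Euc n) :=
    fun c => LinearMap.id + c • LinearMap.smulRight f v with hT
  have hTapp : ∀ (c : ℝ) (y : Euc n), T c y = y + (c * f y) • v := by
    intro c y; simp [hT, smul_smul]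
  have hTcomp : ∀ c d : ℝ, (T c).comp (T d) = T (c + d) := by
    intro c d
    apply LinearMap.ext
    intro y
    have h0 : f ((d * f y) • v) = 0 := by rw [LinearMap.map_smul, hfv, smul_zero]
    rw [LinearMap.comp_apply, hTapp, hTapp, hTapp, map_add, h0, add_zero]
    module
  have hT0 : T 0 = LinearMap.id := by
    ext y; simp [hTapp]
  -- as linear equivalences
  have hTinv : ∀ c : ℝ, (T c).comp (T (-c)) = LinearMap.id := by
    intro c; rw [hTcomp, add_neg_cancel, hT0]
  set ψ : ℝ → (Euc n ≃ₗ[ℝ] Euc n) :=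
    fun c => LinearEquiv.ofLinear (T c) (T (-c)) (hTinv c)
      (by have h := hTinv (-c); rwa [neg_neg] at h) with hψ
  have hψcoe : ∀ c : ℝ, ((ψ c : Euc n ≃ₗ[ℝ] Euc n) : Euc n →ₗ[ℝ] Euc n) = T c := by
    intro c; rfl
  have hψdet : ∀ c : ℝ, LinearMap.det ((ψ c : Euc n ≃ₗ[ℝ] Euc n) : Euc n →ₗ[ℝ] Euc n) = 1 := by
    intro c; rw [hψcoe]; exact det_shear f v hfv c
  -- ψ c fixes K pointwise
  have hfix : ∀ (c : ℝ) (y : Euc n), y ∈ (K : Set (Euc n)) → T c y = y := by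
    intro c y hy
    have : f y = 0 := hfE y (Submodule.subset_span hy)
    rw [hTapp, this, mul_zero, zero_smul, add_zero]
  have hmapK : ∀ c : ℝ, mapBody (T c) K = K := by
    intro c
    apply ConvexBody.ext
    show T c '' (K : Set (Euc n)) = (K : Set (Euc n))
    ext y
    constructor
    · rintro ⟨w, hw, rfl⟩; rw [hfix c w hw]; exact hw
    · intro hy; exact ⟨y, hy, hfix c y hy⟩
  -- hence z + c • v ∈ Φ K for all c
  have hmem : ∀ c : ℝ, z + c • v ∈ (Φ K : Set (Euc n)) := by
    intro c
    have h1 := hSL (ψ c) (hψdet c) K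
    rw [hψcoe] at h1
    rw [hmapK c] at h1
    have h2 : T c z ∈ (mapBody (T c) (Φ K) : Set (Euc n)) := ⟨z, hz, rfl⟩
    rw [← h1] at h2
    rw [hTapp, hfz, mul_one] at h2
    exact h2
  -- contradiction with boundedness of Φ K
  obtain ⟨R, hR⟩ := ((Φ K).isCompact.isBounded).exists_norm_le
  have hv0' : 0 < ‖v‖ := norm_pos_iff.mpr hv0
  set c : ℝ := (R + ‖z‖ + 1) / ‖v‖ with hc
  have h1 := hR _ (hmem c)
  have h2 : ‖c • v‖ ≤ ‖z + c • v‖ + ‖z‖ := by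
    have h := norm_sub_le (z + c • v) z
    rwa [add_sub_cancel_left] at h
  have h3 : ‖c • v‖ = R + ‖z‖ + 1 := by
    rw [norm_smul, Real.norm_eq_abs, hc, abs_div, abs_of_nonneg (le_of_lt hv0'),
      div_mul_cancel₀]
    · have hz' : (0:ℝ) ≤ ‖z‖ := norm_nonneg _
      have hR' : 0 ≤ R := le_trans (norm_nonneg _) (hR _ (hmem 0))
      rw [abs_of_nonneg]; linarith
    · exact ne_of_gt hv0'
  linarith


end
end

section
/- Let n ≥ 3 and suppose Φ : 𝒦^n → 𝒦^n is a Minkowski valuation which is SL(n) equivariant and homogeneous of degree r ≠ 1. If K ∈ 𝒦^n satisfies span K ≠ ℝ^n (i.e., the linear hull of K is a proper subspace), then Φ K = {0}. -/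
open scoped RealInnerProductSpace Pointwise NNReal
open MeasureTheory

noncomputable section

variable {n : ℕ}

/-- Key auxiliary lemma: if `f` is a linear functional vanishing on `K` and `f v = 1`,
then every point of `Φ K` lies on the line `ℝ v`. -/
lemma aux_key {n m : ℕ} (hn : n = m + 1) (r : ℝ) (hr : r ≠ 1)
    (Φ : ConvexBody (Euc n) → ConvexBody (Euc n))
    (hSL : IsSLEquivariant Φ) (hhom : IsHomogeneousOfDegree Φ r)
    (K : ConvexBody (Euc n)) (f : Euc n →ₗ[ℝ] ℝ)
    (hfK : ∀ x ∈ (K : Set (Euc n)), f x = 0) (v : Euc n) (hv : f v = 1) :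
    ∀ y ∈ (Φ K : Set (Euc n)), y = f y • v := by
  subst hn
  -- the kernel of `f` has dimension `m`
  have hrange : LinearMap.range f = ⊤ := by
    rw [LinearMap.range_eq_top]
    intro c
    exact ⟨c • v, by simp [hv]⟩
  have hker : Module.finrank ℝ (LinearMap.ker f) = m := by
    have h1 := LinearMap.finrank_range_add_finrank_ker f
    rw [hrange, finrank_top, Module.finrank_self, finrank_euclideanSpace_fin] at h1
    omega
  -- an adapted basis: `v` together with a basis of `ker f`
  let bk : Module.Basis (Fin m) ℝ (LinearMap.ker f) :=
    (Module.finBasis ℝ (LinearMap.ker f)).reindex (finCongr hker)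
  have hli : ∀ (c : ℝ), ∀ x ∈ LinearMap.ker f, c • v + x = 0 → c = 0 := by
    intro c x hx hcx
    have h := congrArg f hcx
    simpa [LinearMap.mem_ker.mp hx, hv] using h
  have hsp : ∀ z : Euc (m+1), ∃ c : ℝ, z + c • v ∈ LinearMap.ker f := by
    intro z
    exact ⟨-f z, by simp [LinearMap.mem_ker, hv]⟩
  let b : Module.Basis (Fin (m+1)) ℝ (Euc (m+1)) := Module.Basis.mkFinCons v bk hli hsp
  have hb0 : b 0 = v := by simp [b, Module.Basis.coe_mkFinCons]
  have hbs : ∀ i : Fin m, f (b i.succ) = 0 := by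
    intro i
    have h : b i.succ = (bk i : Euc (m+1)) := by simp [b, Module.Basis.coe_mkFinCons]
    rw [h]
    exact LinearMap.mem_ker.mp (bk i).2
  -- the key family of `SL` maps
  have key : ∀ l : ℝ, 0 < l → ∃ T : Euc (m+1) →ₗ[ℝ] Euc (m+1),
      (∀ x, T x = l • x + ((l ^ (-(m:ℝ)) - l) * f x) • v) ∧
      ((l ^ r • Φ K : ConvexBody (Euc (m+1))) : Set (Euc (m+1)))
        = T '' (Φ K : Set (Euc (m+1))) := by
    intro l hl
    set μ : ℝ := l ^ (-(m:ℝ)) with hμ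
    set d : Fin (m+1) → ℝ := Fin.cons μ (fun _ => l) with hd
    set T : Euc (m+1) →ₗ[ℝ] Euc (m+1) := b.constr ℝ (fun i => d i • b i) with hTdef
    set L : Euc (m+1) →ₗ[ℝ] Euc (m+1) := l • LinearMap.id + (μ - l) • f.smulRight v with hLdef
    have hTL : T = L := by
      apply b.ext
      intro i
      induction i using Fin.cases with
      | zero =>
          rw [hTdef, Module.Basis.constr_basis, hb0]
          simp only [hLdef, hd, Fin.cons_zero, LinearMap.add_apply, LinearMap.smul_apply,
            LinearMap.id_coe, id_eq, LinearMap.smulRight_apply, hv, one_smul]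
          module
      | succ j =>
          rw [hTdef, Module.Basis.constr_basis]
          simp only [hLdef, hd, Fin.cons_succ, LinearMap.add_apply, LinearMap.smul_apply,
            LinearMap.id_coe, id_eq, LinearMap.smulRight_apply, hbs j, zero_smul, smul_zero,
            add_zero]
    have hTx : ∀ x, T x = l • x + ((μ - l) * f x) • v := by
      intro x
      rw [hTL]
      simp only [hLdef, LinearMap.add_apply, LinearMap.smul_apply, LinearMap.id_coe, id_eq,
        LinearMap.smulRight_apply, smul_smul]
    have hmat : LinearMap.toMatrix b b T = Matrix.diagonal d := by
      ext i j
      rw [LinearMap.toMatrix_apply, hTdef, Module.Basis.constr_basis, _root_.map_smul, Module.Basis.repr_self,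
        Matrix.diagonal_apply]
      by_cases h : i = j
      · subst h; simp
      · simp [h, Finsupp.single_apply, Ne.symm h]
    have hdet : LinearMap.det T = 1 := by
      rw [← LinearMap.det_toMatrix b, hmat, Matrix.det_diagonal, Fin.prod_univ_succ]
      simp only [hd, Fin.cons_zero, Fin.cons_succ, Finset.prod_const, Finset.card_univ,
        Fintype.card_fin]
      rw [hμ, ← Real.rpow_natCast l m, ← Real.rpow_add hl]
      simp
    have hunit : IsUnit (LinearMap.toMatrix b b T).det := by
      rw [LinearMap.det_toMatrix, hdet]; exact isUnit_one
    let φ : Euc (m+1) ≃ₗ[ℝ] Euc (m+1) := LinearEquiv.ofIsUnitDet hunit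
    have hφcoe : (φ : Euc (m+1) →ₗ[ℝ] Euc (m+1)) = T := LinearEquiv.coe_ofIsUnitDet hunit
    have hmap : mapBody (φ : Euc (m+1) →ₗ[ℝ] Euc (m+1)) K = l • K := by
      apply SetLike.ext'
      show (φ : Euc (m+1) →ₗ[ℝ] Euc (m+1)) '' (K : Set (Euc (m+1)))
        = ((l • K : ConvexBody (Euc (m+1))) : Set (Euc (m+1)))
      rw [ConvexBody.coe_smul, hφcoe]
      have hTK : ∀ x ∈ (K : Set (Euc (m+1))), T x = l • x := by
        intro x hx
        rw [hTx x, hfK x hx]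
        simp
      ext z
      simp only [Set.mem_image, Set.mem_smul_set]
      constructor
      · rintro ⟨x, hx, rfl⟩; exact ⟨x, hx, (hTK x hx).symm⟩
      · rintro ⟨x, hx, rfl⟩; exact ⟨x, hx, hTK x hx⟩
    have heq := hSL φ (by rw [hφcoe]; exact hdet) K
    rw [hmap, hφcoe, hhom l hl K] at heq
    exact ⟨T, hTx, by rw [heq]; rfl⟩
  -- the maximum of `‖y - f y • v‖` on `Φ K`
  set g : Euc (m+1) → ℝ := fun y => ‖y - f y • v‖ with hg
  have hgc : Continuous g :=
    (continuous_id.sub ((f.continuous_of_finiteDimensional).smul continuous_const)).norm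
  obtain ⟨y₀, hy₀, hmax⟩ := (Φ K).isCompact.exists_isMaxOn (Φ K).nonempty hgc.continuousOn
  have hstep : ∀ l : ℝ, 0 < l → l * g y₀ ≤ l ^ r * g y₀ := by
    intro l hl
    obtain ⟨T, hT, hset⟩ := key l hl
    have hTy : T y₀ ∈ ((l ^ r • Φ K : ConvexBody (Euc (m+1))) : Set (Euc (m+1))) := by
      rw [hset]; exact ⟨y₀, hy₀, rfl⟩
    rw [ConvexBody.coe_smul] at hTy
    obtain ⟨z, hz, hzeq⟩ := hTy
    have hrpos : (0:ℝ) < l ^ r := Real.rpow_pos_of_pos hl r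
    have h1 : g (T y₀) = l * g y₀ := by
      have hkey2 : T y₀ - f (T y₀) • v = l • (y₀ - f y₀ • v) := by
        rw [hT y₀]
        simp only [_root_.map_add, _root_.map_smul, hv, smul_eq_mul, mul_one]
        module
      show ‖T y₀ - f (T y₀) • v‖ = l * ‖y₀ - f y₀ • v‖
      rw [hkey2, norm_smul, Real.norm_eq_abs, abs_of_pos hl]
    have h2 : g (l ^ r • z) = l ^ r * g z := by
      have hkey3 : l ^ r • z - f (l ^ r • z) • v = (l ^ r) • (z - f z • v) := by
        rw [_root_.map_smul, smul_eq_mul]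
        module
      show ‖l ^ r • z - f (l ^ r • z) • v‖ = l ^ r * ‖z - f z • v‖
      rw [hkey3, norm_smul, Real.norm_eq_abs, abs_of_pos hrpos]
    calc l * g y₀ = g (T y₀) := h1.symm
      _ = g (l ^ r • z) := by
          have hzeq' : T y₀ = l ^ r • z := hzeq.symm
          rw [hzeq']
      _ = l ^ r * g z := h2
      _ ≤ l ^ r * g y₀ := mul_le_mul_of_nonneg_left (hmax hz) hrpos.le
  have hM0 : g y₀ = 0 := by
    by_contra h
    have hMpos : 0 < g y₀ := lt_of_le_of_ne (norm_nonneg _) (Ne.symm h)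
    have h2 := le_of_mul_le_mul_right (hstep 2 (by norm_num)) hMpos
    have h3 := le_of_mul_le_mul_right (hstep (1/2) (by norm_num)) hMpos
    have e2 : 1 ≤ r := by
      nth_rewrite 1 [show (2:ℝ) = (2:ℝ) ^ (1:ℝ) by rw [Real.rpow_one]] at h2
      exact (Real.rpow_le_rpow_left_iff (by norm_num)).mp h2
    have e3 : r ≤ 1 := by
      nth_rewrite 1 [show (1/2:ℝ) = (1/2:ℝ) ^ (1:ℝ) by rw [Real.rpow_one]] at h3
      exact (Real.rpow_le_rpow_left_iff_of_base_lt_one (by norm_num) (by norm_num)).mp h3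
    exact hr (le_antisymm e3 e2)
  intro y hy
  have hgy : g y = 0 := le_antisymm (hM0 ▸ hmax hy) (norm_nonneg _)
  have hgy' : ‖y - f y • v‖ = 0 := hgy
  exact sub_eq_zero.mp (norm_eq_zero.mp hgy')

/-- **Lemma 1 (ii)**: if `r ≠ 1` and `span K ≠ ℝⁿ` then `Φ K = {0}`. -/
theorem minkowski_valuation_lower_dimensional_trivial
    (n : ℕ) (hn : 3 ≤ n) (r : ℝ) (hr : r ≠ 1) (Φ : ConvexBody (Euc n) → ConvexBody (Euc n))
    (hval : IsMinkowskiValuation Φ) (hSL : IsSLEquivariant Φ)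
    (hhom : IsHomogeneousOfDegree Φ r) :
    ∀ K : ConvexBody (Euc n), Submodule.span ℝ (K : Set (Euc n)) ≠ ⊤ →
      (Φ K : Set (Euc n)) = {0} := by
  intro K hspan
  -- a nonzero vector orthogonal to `K`
  have hwex : ((Submodule.span ℝ (K : Set (Euc n)))ᗮ : Submodule ℝ (Euc n)) ≠ ⊥ := by
    intro h
    exact hspan (Submodule.orthogonal_eq_bot_iff.mp h)
  obtain ⟨w, hwmem, hw0⟩ := Submodule.exists_mem_ne_zero_of_ne_bot hwex
  set f : Euc n →ₗ[ℝ] ℝ := ((innerSL ℝ w : Euc n →L[ℝ] ℝ) : Euc n →ₗ[ℝ] ℝ) with hf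
  have hfapp : ∀ x : Euc n, f x = ⟪w, x⟫ := fun x => rfl
  have hfK : ∀ x ∈ (K : Set (Euc n)), f x = 0 := by
    intro x hx
    have hx' : x ∈ Submodule.span ℝ (K : Set (Euc n)) := Submodule.subset_span hx
    have h := (Submodule.mem_orthogonal _ w).mp hwmem x hx'
    rw [hfapp, real_inner_comm]
    exact h
  have hnw : (‖w‖ : ℝ) ^ 2 ≠ 0 := pow_ne_zero 2 (norm_ne_zero_iff.mpr hw0)
  set c : ℝ := ((‖w‖ : ℝ) ^ 2)⁻¹ with hc
  have hv₁ : f (c • w) = 1 := by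
    rw [_root_.map_smul, smul_eq_mul, hfapp, real_inner_self_eq_norm_sq, hc]
    exact inv_mul_cancel₀ hnw
  -- a nonzero vector in the kernel of `f`
  have hkerne : LinearMap.ker f ≠ ⊥ := by
    intro h
    have hinj : Function.Injective f := LinearMap.ker_eq_bot.mp h
    have hle := LinearMap.finrank_le_finrank_of_injective hinj
    rw [finrank_euclideanSpace_fin, Module.finrank_self] at hle
    omega
  obtain ⟨u, humem, hu0⟩ := Submodule.exists_mem_ne_zero_of_ne_bot hkerne
  have hv₂ : f (c • w + u) = 1 := by
    rw [_root_.map_add, hv₁, LinearMap.mem_ker.mp humem, add_zero]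
  have hn' : n = (n - 1) + 1 := by omega
  have h1 := aux_key hn' r hr Φ hSL hhom K f hfK (c • w) hv₁
  have h2 := aux_key hn' r hr Φ hSL hhom K f hfK (c • w + u) hv₂
  rw [Set.eq_singleton_iff_nonempty_unique_mem]
  refine ⟨(Φ K).nonempty, ?_⟩
  intro y hy
  have e1 := h1 y hy
  have e2 := h2 y hy
  rw [smul_add, ← e1] at e2
  have hfu : f y • u = 0 := (left_eq_add.mp e2)
  have hfy : f y = 0 := by
    rcases smul_eq_zero.mp hfu with h | h
    · exact h
    · exact absurd h hu0
  rw [e1, hfy, zero_smul]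

end
end

section
/- Let n ≥ 3 and suppose Φ : 𝒦^n → 𝒦^n is an SL(n) equivariant continuous Minkowski valuation which is homogeneous of degree 1. Then for every K ∈ 𝒦^n and every unit vector u ∈ S^{n−1}, h(Φ K, u) = h(Φ(π_u K), u), where π_u denotes the orthogonal projection of ℝ^n onto the line span{u}. -/
open scoped RealInnerProductSpace Pointwise NNReal
open MeasureTheory

noncomputable section

variable {n : ℕ}

/-- The orthogonal projection onto the line spanned by the unit vector `u`,
`π_u x = ⟪x, u⟫ • u`, as a linear map. -/
def projLine (u : Euc n) : Euc n →ₗ[ℝ] Euc n where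
  toFun x := ⟪x, u⟫ • u
  map_add' x y := by simp [inner_add_left, add_smul]
  map_smul' c x := by simp only [RingHom.id_apply, real_inner_smul_left, mul_smul]


/-! ### Auxiliary lemmas -/

@[simp] lemma projLine_apply (u x : Euc n) : projLine u x = ⟪x, u⟫ • u := rfl

/-- The linear map acting as `a` on `u^⊥` and `b` on the span of `u` (when `‖u‖ = 1`). -/
def dmap (u : Euc n) (a b : ℝ) : Euc n →ₗ[ℝ] Euc n :=
  a • LinearMap.id + (b - a) • projLine u

lemma dmap_apply (u : Euc n) (a b : ℝ) (x : Euc n) :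
    dmap u a b x = a • x + (b - a) • (⟪x, u⟫ • u) := rfl

lemma dmap_one (u : Euc n) : dmap u 1 1 = LinearMap.id := by unfold dmap; simp

lemma smul_dmap (u : Euc n) (c a b : ℝ) : c • dmap u a b = dmap u (c * a) (c * b) := by
  unfold dmap
  rw [smul_add, smul_smul, smul_smul]
  congr 1
  congr 1
  ring

lemma dmap_comp {u : Euc n} (hu : ⟪u, u⟫ = 1) (a b a' b' : ℝ) :
    (dmap u a b).comp (dmap u a' b') = dmap u (a * a') (b * b') := by
  apply LinearMap.ext; intro x
  simp only [LinearMap.comp_apply, dmap_apply, inner_add_left, real_inner_smul_left, hu]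
  module

/-- `dmap` as a linear equivalence, for nonzero `a`, `b`. -/
def demap (u : Euc n) (hu : ⟪u, u⟫ = 1) (a b : ℝ) (ha : a ≠ 0) (hb : b ≠ 0) :
    Euc n ≃ₗ[ℝ] Euc n :=
  LinearEquiv.ofLinear (dmap u a b) (dmap u a⁻¹ b⁻¹)
    (by rw [dmap_comp hu, mul_inv_cancel₀ ha, mul_inv_cancel₀ hb, dmap_one])
    (by rw [dmap_comp hu, inv_mul_cancel₀ ha, inv_mul_cancel₀ hb, dmap_one])

lemma demap_coe (u : Euc n) (hu : ⟪u, u⟫ = 1) (a b : ℝ) (ha : a ≠ 0) (hb : b ≠ 0) :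
    (demap u hu a b ha hb : Euc n →ₗ[ℝ] Euc n) = dmap u a b := rfl

lemma det_dmap (hn1 : 1 ≤ n) {u : Euc n} (hu : ‖u‖ = 1) (a b : ℝ) :
    LinearMap.det (dmap u a b) = b * a ^ (n - 1) := by
  haveI : NeZero n := ⟨by omega⟩
  have hcard : Module.finrank ℝ (Euc n) = Fintype.card (Fin n) := by simp
  have horth : Orthonormal ℝ (({0} : Set (Fin n)).restrict (fun _ : Fin n => u)) := by
    constructor
    · intro i; exact hu
    · intro i j hij
      exact absurd (Subtype.ext ((i.2 : (i : Fin n) ∈ ({0} : Set (Fin n)))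
        |>.trans (j.2 : (j : Fin n) ∈ ({0} : Set (Fin n))).symm)) hij
  obtain ⟨B, hB⟩ := horth.exists_orthonormalBasis_extension_of_card_eq hcard
  have hB0 : B 0 = u := hB 0 rfl
  have hBij : ∀ i j : Fin n, ⟪B i, B j⟫ = if i = j then 1 else 0 :=
    fun i j => orthonormal_iff_ite.mp B.orthonormal i j
  rw [← LinearMap.det_toMatrix B.toBasis]
  have hmat : LinearMap.toMatrix B.toBasis B.toBasis (dmap u a b)
      = Matrix.diagonal (fun i => if i = 0 then b else a) := by
    ext i j
    rw [LinearMap.toMatrix_apply, OrthonormalBasis.coe_toBasis,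
        OrthonormalBasis.coe_toBasis_repr_apply, OrthonormalBasis.repr_apply_apply,
        dmap_apply, ← hB0]
    rw [inner_add_right, real_inner_smul_right, real_inner_smul_right,
        real_inner_smul_right, hBij, hBij, hBij]
    by_cases hij : i = j
    · subst hij
      by_cases hi : i = 0 <;> simp [Matrix.diagonal_apply, hi]
    · have h1 : ¬ (j = 0 ∧ i = 0) := by rintro ⟨rfl, rfl⟩; exact hij rfl
      rw [Matrix.diagonal_apply_ne _ hij, if_neg hij]
      by_cases hj : j = 0 <;> by_cases hi : i = 0 <;> simp_all
  rw [hmat, Matrix.det_diagonal,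
    ← Finset.mul_prod_erase Finset.univ _ (Finset.mem_univ (0 : Fin n)), if_pos rfl]
  congr 1
  rw [Finset.prod_congr rfl (fun i hi => if_neg (Finset.ne_of_mem_erase hi)),
    Finset.prod_const, Finset.card_erase_of_mem (Finset.mem_univ _), Finset.card_univ,
    Fintype.card_fin]

lemma bddAbove_supp_set (K : ConvexBody (Euc n)) (x : Euc n) :
    BddAbove ((fun y => ⟪x, y⟫) '' (K : Set (Euc n))) :=
  (K.isCompact.image (continuous_const.inner continuous_id)).bddAbove

lemma le_supp (K : ConvexBody (Euc n)) (x : Euc n) {y : Euc n} (hy : y ∈ (K : Set (Euc n))) :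
    ⟪x, y⟫ ≤ supp K x :=
  le_csSup (bddAbove_supp_set K x) ⟨y, hy, rfl⟩

lemma supp_le_bound (K : ConvexBody (Euc n)) (x : Euc n) {c : ℝ}
    (h : ∀ y ∈ (K : Set (Euc n)), ⟪x, y⟫ ≤ c) : supp K x ≤ c :=
  csSup_le (K.nonempty.image _) (by rintro r ⟨y, hy, rfl⟩; exact h y hy)

lemma supp_le_supp_add (K L : ConvexBody (Euc n)) (x : Euc n) :
    supp K x ≤ supp L x + ‖x‖ * dist K L := by
  refine supp_le_bound K x fun y hy => ?_
  have h1 : Metric.infDist y (L : Set (Euc n)) ≤ dist K L :=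
    Metric.infDist_le_hausdorffDist_of_mem hy ConvexBody.hausdorffEdist_ne_top
  obtain ⟨z, hz, hdz⟩ := L.isCompact.exists_infDist_eq_dist L.nonempty y
  have h2 : ⟪x, y - z⟫ ≤ ‖x‖ * ‖y - z‖ := real_inner_le_norm x (y - z)
  have h3 : ‖y - z‖ = dist y z := (dist_eq_norm y z).symm
  have h4 : dist y z ≤ dist K L := hdz ▸ h1
  have h5 : ⟪x, z⟫ ≤ supp L x := le_supp L x hz
  have h6 : ⟪x, y⟫ = ⟪x, z⟫ + ⟪x, y - z⟫ := by rw [inner_sub_right]; ring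
  nlinarith [norm_nonneg x]

lemma supp_lipschitz (x : Euc n) :
    LipschitzWith ‖x‖₊ (fun K : ConvexBody (Euc n) => supp K x) := by
  refine LipschitzWith.of_dist_le_mul fun K L => ?_
  rw [Real.dist_eq, abs_sub_le_iff, coe_nnnorm]
  have h1 := supp_le_supp_add K L x
  have h2 := supp_le_supp_add L K x
  rw [dist_comm] at h2
  constructor <;> linarith

lemma supp_smul {c : ℝ} (hc : 0 ≤ c) (K : ConvexBody (Euc n)) (x : Euc n) :
    supp (c • K) x = c * supp K x := by
  unfold supp
  rw [ConvexBody.coe_smul]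
  have h : (fun y => ⟪x, y⟫) '' (c • (K : Set (Euc n)))
      = (fun r => c • r) '' ((fun y => ⟪x, y⟫) '' (K : Set (Euc n))) := by
    rw [← Set.image_smul, Set.image_image, Set.image_image]
    simp only [real_inner_smul_right, smul_eq_mul]
  rw [h, Set.image_smul, Real.sSup_smul_of_nonneg hc, smul_eq_mul]

lemma supp_mapBody (f : Euc n →ₗ[ℝ] Euc n) (K : ConvexBody (Euc n)) (x : Euc n) :
    supp (mapBody f K) x = sSup ((fun y => ⟪x, f y⟫) '' (K : Set (Euc n))) := by
  unfold supp mapBody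
  rw [ConvexBody.coe_mk, Set.image_image]

lemma mapBody_smul (c : ℝ) (f : Euc n →ₗ[ℝ] Euc n) (K : ConvexBody (Euc n)) :
    mapBody (c • f) K = c • mapBody f K := by
  apply ConvexBody.ext
  show (c • f) '' (K : Set (Euc n)) = c • (f '' (K : Set (Euc n)))
  rw [← Set.image_smul, ← Set.image_comp]
  rfl

lemma inner_dmap {u : Euc n} (hu : ⟪u, u⟫ = 1) (a b : ℝ) (y : Euc n) :
    ⟪u, dmap u a b y⟫ = b * ⟪u, y⟫ := by
  rw [dmap_apply, inner_add_right, real_inner_smul_right, real_inner_smul_right,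
    real_inner_smul_right, hu, real_inner_comm y u]
  ring

lemma supp_mapBody_dmap {u : Euc n} (hu : ⟪u, u⟫ = 1) (a : ℝ) {b : ℝ} (hb : 0 ≤ b)
    (K : ConvexBody (Euc n)) :
    supp (mapBody (dmap u a b) K) u = b * supp K u := by
  rw [supp_mapBody]
  have h : (fun y => ⟪u, dmap u a b y⟫) '' (K : Set (Euc n))
      = (fun r => b • r) '' ((fun y => ⟪u, y⟫) '' (K : Set (Euc n))) := by
    rw [Set.image_image]
    apply Set.image_congr
    intro y _
    rw [inner_dmap hu, smul_eq_mul]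
  rw [h, Set.image_smul, Real.sSup_smul_of_nonneg hb, smul_eq_mul]
  rfl

/-- Equation (9): a `1`-homogeneous `SL(n)` equivariant continuous Minkowski valuation
is determined by its values on bodies contained in lines through the origin:
`h(Φ K, u) = h(Φ (π_u K), u)`. -/
theorem supp_eq_supp_projection
    (n : ℕ) (hn : 3 ≤ n) (Φ : ConvexBody (Euc n) → ConvexBody (Euc n))
    (hcont : Continuous Φ) (hval : IsMinkowskiValuation Φ) (hSL : IsSLEquivariant Φ)
    (hhom : IsHomogeneousOfDegree Φ 1) :
    ∀ (K : ConvexBody (Euc n)) (u : Euc n), ‖u‖ = 1 →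
      supp (Φ K) u = supp (Φ (mapBody (projLine u) K)) u := by
  intro K u hu
  have huu : ⟪u, u⟫ = 1 := by rw [real_inner_self_eq_norm_mul_norm, hu]; ring
  obtain ⟨m, hm⟩ : ∃ m, n = m + 1 := ⟨n - 1, by omega⟩
  -- the key identity for positive parameters
  have key : ∀ t : ℝ, 0 < t → supp (Φ (mapBody (dmap u (t ^ n) 1) K)) u = supp (Φ K) u := by
    intro t ht
    set bt : ℝ := (t ^ m)⁻¹ with hbt
    have htm : (t : ℝ) ^ m ≠ 0 := pow_ne_zero _ ht.ne'
    have hbtpos : 0 < bt := by positivity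
    have hbtt : bt * t ^ n = t := by
      rw [hm, pow_succ, hbt, ← mul_assoc, inv_mul_cancel₀ htm, one_mul]
    have hdet : LinearMap.det ((demap u huu t bt ht.ne' hbtpos.ne' : Euc n ≃ₗ[ℝ] Euc n)
        : Euc n →ₗ[ℝ] Euc n) = 1 := by
      rw [demap_coe, det_dmap (by omega) hu, (by omega : n - 1 = m), hbt,
        inv_mul_cancel₀ htm]
    have hSLt := hSL _ hdet K
    rw [demap_coe] at hSLt
    -- rewrite the left side
    have hsm : dmap u t bt = bt • dmap u (t ^ n) 1 := by
      rw [smul_dmap, hbtt, mul_one]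
    have hleft : Φ (mapBody (dmap u t bt) K)
        = bt • Φ (mapBody (dmap u (t ^ n) 1) K) := by
      rw [hsm, mapBody_smul, hhom bt hbtpos, Real.rpow_one]
    -- take support functions at u
    have := congrArg (fun L => supp L u) hSLt
    rw [hleft, supp_smul hbtpos.le, supp_mapBody_dmap huu t hbtpos.le] at this
    exact mul_left_cancel₀ hbtpos.ne' this
  -- continuity in the parameter
  set G : ℝ → ConvexBody (Euc n) := fun s => mapBody (dmap u s 1) K with hG
  obtain ⟨R, hR⟩ := Bornology.IsBounded.exists_norm_le K.isBounded
  have hGdist : ∀ s : ℝ, dist (G s) (G 0) ≤ |s| * (2 * R) := by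
    intro s
    have hr : (0 : ℝ) ≤ |s| * (2 * R) := by
      obtain ⟨y, hy⟩ := K.nonempty
      have := (norm_nonneg y).trans (hR y hy)
      positivity
    refine Metric.hausdorffDist_le_of_mem_dist hr ?_ ?_
    · rintro x ⟨y, hy, rfl⟩
      refine ⟨dmap u 0 1 y, ⟨y, hy, rfl⟩, ?_⟩
      rw [dist_eq_norm]
      have hxy : dmap u s 1 y - dmap u 0 1 y = s • (y - ⟪y, u⟫ • u) := by
        rw [dmap_apply, dmap_apply]; module
      rw [hxy, norm_smul, Real.norm_eq_abs]
      have h1 : ‖y - ⟪y, u⟫ • u‖ ≤ 2 * R := by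
        have h2 : ‖⟪y, u⟫ • u‖ ≤ ‖y‖ := by
          rw [norm_smul, Real.norm_eq_abs, hu, mul_one]
          exact (abs_real_inner_le_norm y u).trans (by rw [hu, mul_one])
        have := hR y hy
        calc ‖y - ⟪y, u⟫ • u‖ ≤ ‖y‖ + ‖⟪y, u⟫ • u‖ := norm_sub_le _ _
          _ ≤ 2 * R := by linarith
      exact mul_le_mul_of_nonneg_left h1 (abs_nonneg s)
    · rintro x ⟨y, hy, rfl⟩
      refine ⟨dmap u s 1 y, ⟨y, hy, rfl⟩, ?_⟩
      rw [dist_comm, dist_eq_norm]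
      have hxy : dmap u s 1 y - dmap u 0 1 y = s • (y - ⟪y, u⟫ • u) := by
        rw [dmap_apply, dmap_apply]; module
      rw [hxy, norm_smul, Real.norm_eq_abs]
      have h1 : ‖y - ⟪y, u⟫ • u‖ ≤ 2 * R := by
        have h2 : ‖⟪y, u⟫ • u‖ ≤ ‖y‖ := by
          rw [norm_smul, Real.norm_eq_abs, hu, mul_one]
          exact (abs_real_inner_le_norm y u).trans (by rw [hu, mul_one])
        have := hR y hy
        calc ‖y - ⟪y, u⟫ • u‖ ≤ ‖y‖ + ‖⟪y, u⟫ • u‖ := norm_sub_le _ _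
          _ ≤ 2 * R := by linarith
      exact mul_le_mul_of_nonneg_left h1 (abs_nonneg s)
  have hGcont : Filter.Tendsto G (nhds 0) (nhds (G 0)) := by
    rw [tendsto_iff_dist_tendsto_zero]
    apply squeeze_zero (fun s => dist_nonneg) hGdist
    have h : Filter.Tendsto (fun s : ℝ => |s| * (2 * R)) (nhds 0) (nhds (|(0:ℝ)| * (2 * R))) :=
      (continuous_abs.mul continuous_const).tendsto (0 : ℝ)
    simpa using h
  have hpow : Filter.Tendsto (fun t : ℝ => t ^ n) (nhdsWithin 0 (Set.Ioi 0)) (nhds 0) := by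
    have h : Filter.Tendsto (fun t : ℝ => t ^ n) (nhdsWithin 0 (Set.Ioi 0)) (nhds ((0:ℝ) ^ n)) :=
      ((continuous_pow n).tendsto (0 : ℝ)).mono_left (nhdsWithin_le_nhds (s := Set.Ioi 0))
    simpa [zero_pow (by omega : n ≠ 0)] using h
  have h1 : Filter.Tendsto (fun t : ℝ => supp (Φ (G (t ^ n))) u)
      (nhdsWithin 0 (Set.Ioi 0)) (nhds (supp (Φ (G 0)) u)) :=
    ((supp_lipschitz u).continuous.tendsto _).comp
      ((hcont.tendsto _).comp (hGcont.comp hpow))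
  have h2 : Filter.Tendsto (fun t : ℝ => supp (Φ (G (t ^ n))) u)
      (nhdsWithin 0 (Set.Ioi 0)) (nhds (supp (Φ K) u)) := by
    refine Filter.Tendsto.congr' ?_ tendsto_const_nhds
    filter_upwards [self_mem_nhdsWithin] with t ht
    exact (key t ht).symm
  have hmain := tendsto_nhds_unique h1 h2
  have hG0 : G 0 = mapBody (projLine u) K := by
    have h : dmap u 0 1 = projLine u := by unfold dmap; simp
    rw [hG]; simp only [h]
  rw [hG0] at hmain
  exact hmain.symm


end
end

section
/- Let n ≥ 3 and let Φ₁, Φ₂ : 𝒦^n → 𝒦^n be SL(n) equivariant continuous Minkowski valuations which are homogeneous of degree 1. If there exists x ∈ ℝ^n with x ≠ 0 such that Φ₁{x} = Φ₂{x} and Φ₁[0,x] = Φ₂[0,x], then Φ₁ = Φ₂. Here [0,x] denotes the segment from the origin to x, i.e., the convex hull of {0, x}. -/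
open scoped RealInnerProductSpace Pointwise NNReal
open MeasureTheory

noncomputable section

variable {n : ℕ}

/-- The convex body `{x}`. -/
def ptBody (x : Euc n) : ConvexBody (Euc n) :=
  ⟨{x}, convex_singleton x, isCompact_singleton, Set.singleton_nonempty x⟩

/-- The segment `[0, x]` as a convex body. -/
def segBody (x : Euc n) : ConvexBody (Euc n) :=
  ⟨convexHull ℝ {0, x}, convex_convexHull ℝ _,
    ((Set.finite_singleton x).insert 0).isCompact_convexHull ℝ,
    ⟨x, subset_convexHull ℝ _ (by simp)⟩⟩

namespace Lemma5Aux

open Filter Topology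

/-! ### Rådström cancellation -/

lemma radstrom_subset {n : ℕ} {A B C : Set (Euc n)} (hB_cv : Convex ℝ B) (hB_cl : IsClosed B)
    (hC_ne : C.Nonempty) (hC_bd : Bornology.IsBounded C) (h : A + C ⊆ B + C) : A ⊆ B := by
  obtain ⟨R, hR⟩ := hC_bd.exists_norm_le
  obtain ⟨c₀, hc₀⟩ := hC_ne
  intro a ha
  have claim : ∀ k : ℕ, ∃ (bs : Fin k → Euc n) (c : Euc n),
      (∀ i, bs i ∈ B) ∧ c ∈ C ∧ (k : ℝ) • a + c₀ = (∑ i, bs i) + c := by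
    intro k
    induction k with
    | zero => exact ⟨(fun i => i.elim0), c₀, (fun i => i.elim0), hc₀, by simp⟩
    | succ k ih =>
      obtain ⟨bs, c, hbs, hc, heq⟩ := ih
      have hmem : a + c ∈ B + C := h (Set.add_mem_add ha hc)
      rw [Set.mem_add] at hmem
      obtain ⟨b', hb', c', hc', hbc⟩ := hmem
      refine ⟨Fin.snoc bs b', c', ?_, hc', ?_⟩
      · intro i
        refine Fin.lastCases ?_ ?_ i
        · simpa using hb'
        · intro j; simpa using hbs j
      · have hsum : (∑ i, Fin.snoc bs b' i) = (∑ i, bs i) + b' := by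
          rw [Fin.sum_univ_castSucc]; simp
        rw [hsum]
        have : ((k : ℝ) + 1) • a + c₀ = ((k : ℝ) • a + c₀) + a := by
          rw [add_smul, one_smul]; abel
        push_cast
        rw [this, heq]
        calc (∑ i, bs i) + c + a = (∑ i, bs i) + (a + c) := by abel
          _ = (∑ i, bs i) + (b' + c') := by rw [hbc]
          _ = (∑ i, bs i) + b' + c' := by abel
  rw [← hB_cl.closure_eq]
  rw [Metric.mem_closure_iff]
  intro ε hε
  -- choose k large
  obtain ⟨k, hk⟩ := exists_nat_gt ((R + ‖c₀‖) / ε)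
  obtain ⟨bs, c, hbs, hc, heq⟩ := claim (k + 1)
  set m : ℝ := ((k : ℝ) + 1) with hm
  have hm0 : 0 < m := by positivity
  refine ⟨m⁻¹ • ∑ i, bs i, ?_, ?_⟩
  · have := hB_cv.sum_mem (t := (Finset.univ : Finset (Fin (k + 1))))
      (w := fun _ => m⁻¹) (z := bs) (fun i _ => by positivity)
      (by simp [hm]; rw [mul_inv_cancel₀ hm0.ne']) (fun i _ => hbs i)
    rwa [← Finset.smul_sum] at this
  · have heq' : a - m⁻¹ • ∑ i, bs i = m⁻¹ • (c - c₀) := by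
      have h1 : (m : ℝ) • a + c₀ = (∑ i, bs i) + c := by
        rw [hm]; push_cast at heq ⊢; exact heq
      have h2 : a + m⁻¹ • c₀ = m⁻¹ • ∑ i, bs i + m⁻¹ • c := by
        rw [← smul_add, ← h1, smul_add, smul_smul, inv_mul_cancel₀ hm0.ne', one_smul]
      rw [eq_sub_of_add_eq h2, smul_sub]; abel
    rw [dist_eq_norm, heq', norm_smul]
    have hcb : ‖c - c₀‖ ≤ R + ‖c₀‖ := by
      calc ‖c - c₀‖ ≤ ‖c‖ + ‖c₀‖ := norm_sub_le _ _
        _ ≤ R + ‖c₀‖ := by have := hR c hc; linarith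
    have hmlt : (R + ‖c₀‖) / ε < m := by
      rw [hm]; calc (R + ‖c₀‖) / ε < (k : ℝ) := hk
        _ < (k : ℝ) + 1 := by linarith
    have hRc0 : 0 ≤ R + ‖c₀‖ := le_trans (norm_nonneg _) hcb
    calc ‖m⁻¹‖ * ‖c - c₀‖ ≤ m⁻¹ * (R + ‖c₀‖) := by
          rw [norm_inv, Real.norm_eq_abs, abs_of_pos hm0]
          exact mul_le_mul_of_nonneg_left hcb (by positivity)
      _ < ε := by
          rw [inv_mul_lt_iff₀ hm0]
          rw [div_lt_iff₀ hε] at hmlt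
          linarith [hmlt]

theorem body_add_right_cancel {n : ℕ} {A B C : ConvexBody (Euc n)} (h : A + C = B + C) :
    A = B := by
  have hsets : (A : Set (Euc n)) + C = (B : Set (Euc n)) + C := by
    rw [← ConvexBody.coe_add, ← ConvexBody.coe_add, h]
  exact ConvexBody.ext (Set.Subset.antisymm
    (radstrom_subset B.convex B.isClosed C.nonempty C.isBounded hsets.le)
    (radstrom_subset A.convex A.isClosed C.nonempty C.isBounded hsets.ge))

/-! ### The image of a `{0}` body is `{0}` -/

lemma coe_smul_body {n : ℕ} (c : ℝ) (K : ConvexBody (Euc n)) :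
    ((c • K : ConvexBody (Euc n)) : Set (Euc n)) = c • (K : Set (Euc n)) := rfl

lemma mapBody_coe {n : ℕ} (φ : Euc n →ₗ[ℝ] Euc n) (K : ConvexBody (Euc n)) :
    (mapBody φ K : Set (Euc n)) = φ '' (K : Set (Euc n)) := rfl

lemma phi_zero_body {n : ℕ} (Φ : ConvexBody (Euc n) → ConvexBody (Euc n))
    (hhom : IsHomogeneousOfDegree Φ 1) (X : ConvexBody (Euc n))
    (hX : (X : Set (Euc n)) = {0}) : (Φ X : Set (Euc n)) = {0} := by
  have hsm : ∀ c : ℝ, 0 < c → c • X = X := by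
    intro c hc
    refine ConvexBody.ext ?_
    rw [coe_smul_body, hX]
    simp [Set.smul_set_singleton]
  have key : ∀ c : ℝ, 0 < c → Φ X = c • Φ X := by
    intro c hc
    conv_lhs => rw [← hsm c hc]
    rw [hhom c hc X, Real.rpow_one]
  obtain ⟨R, hR⟩ := (Φ X).isBounded.exists_norm_le
  have hall : ∀ y ∈ (Φ X : Set (Euc n)), y = 0 := by
    intro y hy
    have hnorm : ∀ c : ℝ, 0 < c → ‖y‖ ≤ c * R := by
      intro c hc
      have hmem : y ∈ ((c • Φ X : ConvexBody (Euc n)) : Set (Euc n)) := by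
        rw [← key c hc]; exact hy
      rw [coe_smul_body] at hmem
      obtain ⟨z, hz, rfl⟩ := hmem
      rw [norm_smul, Real.norm_eq_abs, abs_of_pos hc]
      exact mul_le_mul_of_nonneg_left (hR z hz) hc.le
    have hR0 : 0 ≤ R := le_trans (norm_nonneg y) (by simpa using hnorm 1 one_pos)
    by_contra hy0
    have hpos : 0 < ‖y‖ := norm_pos_iff.2 hy0
    have hle := hnorm (‖y‖ / (2 * (R + 1))) (by positivity)
    have h2 : ‖y‖ / (2 * (R + 1)) * R < ‖y‖ := by
      rw [div_mul_eq_mul_div, div_lt_iff₀ (by positivity)]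
      nlinarith
    linarith
  obtain ⟨y₀, hy₀⟩ := (Φ X).nonempty
  ext z
  simp only [Set.mem_singleton_iff]
  constructor
  · intro hz; exact hall z hz
  · intro hz; subst hz; rw [← hall y₀ hy₀]; exact hy₀

/-! ### `GL⁺` equivariance from `SL` equivariance and homogeneity -/

lemma gl_equivariant {n : ℕ} (hn : 0 < n) (Φ : ConvexBody (Euc n) → ConvexBody (Euc n))
    (hSL : IsSLEquivariant Φ) (hhom : IsHomogeneousOfDegree Φ 1)
    (φ : Euc n ≃ₗ[ℝ] Euc n) (hdet : 0 < LinearMap.det (φ : Euc n →ₗ[ℝ] Euc n))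
    (K : ConvexBody (Euc n)) :
    Φ (mapBody (φ : Euc n →ₗ[ℝ] Euc n) K) = mapBody (φ : Euc n →ₗ[ℝ] Euc n) (Φ K) := by
  set D := LinearMap.det (φ : Euc n →ₗ[ℝ] Euc n) with hD
  set c : ℝ := D ^ ((n : ℝ)⁻¹) with hcdef
  have hc : 0 < c := Real.rpow_pos_of_pos hdet _
  have hcn : c ^ n = D := by
    rw [hcdef, ← Real.rpow_natCast (D ^ ((n : ℝ)⁻¹)) n, ← Real.rpow_mul hdet.le,
      inv_mul_cancel₀ (by exact_mod_cast hn.ne'), Real.rpow_one]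
  set ψ := φ.trans (LinearEquiv.smulOfNeZero ℝ (Euc n) c⁻¹ (inv_ne_zero hc.ne')) with hψdef
  have hψcoe : ∀ v, ψ v = c⁻¹ • φ v := fun v => rfl
  have hψlin : (ψ : Euc n →ₗ[ℝ] Euc n) = c⁻¹ • (φ : Euc n →ₗ[ℝ] Euc n) := by
    ext v; simp [hψcoe v]
  have hdetψ : LinearMap.det (ψ : Euc n →ₗ[ℝ] Euc n) = 1 := by
    rw [hψlin, LinearMap.det_smul, finrank_euclideanSpace_fin, ← hD, inv_pow, ← hcn,
      inv_mul_cancel₀ (pow_ne_zero _ hc.ne')]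
  have hbody : ∀ L : ConvexBody (Euc n),
      mapBody (φ : Euc n →ₗ[ℝ] Euc n) L = c • mapBody (ψ : Euc n →ₗ[ℝ] Euc n) L := by
    intro L
    refine ConvexBody.ext ?_
    rw [coe_smul_body, mapBody_coe, mapBody_coe, ← Set.image_smul, Set.image_image]
    apply Set.image_congr
    intro v _
    show φ v = c • ψ v
    rw [hψcoe v, smul_smul, mul_inv_cancel₀ hc.ne', one_smul]
  calc Φ (mapBody (φ : Euc n →ₗ[ℝ] Euc n) K)
      = Φ (c • mapBody (ψ : Euc n →ₗ[ℝ] Euc n) K) := by rw [hbody]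
    _ = c ^ (1 : ℝ) • Φ (mapBody (ψ : Euc n →ₗ[ℝ] Euc n) K) := hhom c hc _
    _ = c • mapBody (ψ : Euc n →ₗ[ℝ] Euc n) (Φ K) := by rw [hSL ψ hdetψ K, Real.rpow_one]
    _ = mapBody (φ : Euc n →ₗ[ℝ] Euc n) (Φ K) := (hbody (Φ K)).symm

/-! ### Diagonal maps relative to a pair of bases -/

def diagMap (n : ℕ) (d : Fin n → ℝ) : (Fin n → ℝ) →ₗ[ℝ] (Fin n → ℝ) :=
  LinearMap.pi fun i => d i • LinearMap.proj i

@[simp] lemma diagMap_apply {n : ℕ} (d : Fin n → ℝ) (w : Fin n → ℝ) (i : Fin n) :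
    diagMap n d w i = d i * w i := rfl

lemma det_diagMap {n : ℕ} (d : Fin n → ℝ) : LinearMap.det (diagMap n d) = ∏ i, d i := by
  have h : diagMap n d = Matrix.toLin' (Matrix.diagonal d) := by
    refine LinearMap.ext fun w => funext fun i => ?_
    rw [diagMap_apply, Matrix.toLin'_apply, Matrix.mulVec_diagonal]
  rw [h, LinearMap.det_toLin', Matrix.det_diagonal]

def diagEquiv (n : ℕ) (d : Fin n → ℝ) (hd : ∀ i, d i ≠ 0) :
    (Fin n → ℝ) ≃ₗ[ℝ] (Fin n → ℝ) :=
  LinearEquiv.ofLinear (diagMap n d) (diagMap n fun i => (d i)⁻¹)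
    (LinearMap.ext fun w => funext fun i => by
      simp only [LinearMap.comp_apply, diagMap_apply, LinearMap.id_apply]
      rw [← mul_assoc, mul_inv_cancel₀ (hd i), one_mul])
    (LinearMap.ext fun w => funext fun i => by
      simp only [LinearMap.comp_apply, diagMap_apply, LinearMap.id_apply]
      rw [← mul_assoc, inv_mul_cancel₀ (hd i), one_mul])

@[simp] lemma diagEquiv_coe {n : ℕ} (d : Fin n → ℝ) (hd : ∀ i, d i ≠ 0) :
    (diagEquiv n d hd : (Fin n → ℝ) →ₗ[ℝ] (Fin n → ℝ)) = diagMap n d := rfl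

/-- The linear map with "matrix" `diag d` relative to the bases `c` (source) and `b`
(target). -/
def bcMap {n : ℕ} (b c : Module.Basis (Fin n) ℝ (Euc n)) (d : Fin n → ℝ) : Euc n →ₗ[ℝ] Euc n :=
  (b.equivFun.symm : (Fin n → ℝ) →ₗ[ℝ] Euc n) ∘ₗ diagMap n d ∘ₗ
    (c.equivFun : Euc n →ₗ[ℝ] (Fin n → ℝ))

lemma bcMap_apply {n : ℕ} (b c : Module.Basis (Fin n) ℝ (Euc n)) (d : Fin n → ℝ) (v : Euc n) :
    bcMap b c d v = ∑ i, (d i * c.equivFun v i) • b i := by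
  rw [bcMap]
  simp only [LinearMap.comp_apply, LinearEquiv.coe_coe]
  rw [Module.Basis.equivFun_symm_apply]
  congr 1

/-- The determinant of the base-change from `b` to `c`. -/
def bcDelta {n : ℕ} (b c : Module.Basis (Fin n) ℝ (Euc n)) : ℝ :=
  LinearMap.det ((c.equivFun : Euc n →ₗ[ℝ] (Fin n → ℝ)) ∘ₗ
    (b.equivFun.symm : (Fin n → ℝ) →ₗ[ℝ] Euc n))

lemma bcDelta_ne_zero {n : ℕ} (b c : Module.Basis (Fin n) ℝ (Euc n)) : bcDelta b c ≠ 0 := by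
  have h : (c.equivFun : Euc n →ₗ[ℝ] (Fin n → ℝ)) ∘ₗ
      (b.equivFun.symm : (Fin n → ℝ) →ₗ[ℝ] Euc n)
      = ((b.equivFun.symm.trans c.equivFun : (Fin n → ℝ) ≃ₗ[ℝ] (Fin n → ℝ)) :
          (Fin n → ℝ) →ₗ[ℝ] (Fin n → ℝ)) := rfl
  rw [bcDelta, h]
  exact (LinearEquiv.isUnit_det' _).ne_zero

lemma det_bcMap {n : ℕ} (b c : Module.Basis (Fin n) ℝ (Euc n)) (d : Fin n → ℝ) :
    LinearMap.det (bcMap b c d) = (∏ i, d i) * bcDelta b c := by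
  have h : bcMap b c d = (b.equivFun.symm : (Fin n → ℝ) →ₗ[ℝ] Euc n) ∘ₗ
      ((diagMap n d ∘ₗ ((c.equivFun : Euc n →ₗ[ℝ] (Fin n → ℝ)) ∘ₗ
        (b.equivFun.symm : (Fin n → ℝ) →ₗ[ℝ] Euc n))) ∘ₗ
        ((b.equivFun.symm.symm : Euc n ≃ₗ[ℝ] (Fin n → ℝ)) : Euc n →ₗ[ℝ] (Fin n → ℝ))) := by
    refine LinearMap.ext fun v => ?_
    simp only [bcMap, LinearMap.comp_apply, LinearEquiv.coe_coe, LinearEquiv.symm_symm,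
      LinearEquiv.symm_apply_apply]
  rw [h, LinearMap.det_conj, LinearMap.det_comp, det_diagMap, bcDelta]

def bcEquiv {n : ℕ} (b c : Module.Basis (Fin n) ℝ (Euc n)) (d : Fin n → ℝ) (hd : ∀ i, d i ≠ 0) :
    Euc n ≃ₗ[ℝ] Euc n :=
  (c.equivFun).trans ((diagEquiv n d hd).trans b.equivFun.symm)

lemma bcEquiv_coe {n : ℕ} (b c : Module.Basis (Fin n) ℝ (Euc n)) (d : Fin n → ℝ)
    (hd : ∀ i, d i ≠ 0) :
    (bcEquiv b c d hd : Euc n →ₗ[ℝ] Euc n) = bcMap b c d := rfl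

lemma diagMap_add {n : ℕ} (d e : Fin n → ℝ) :
    diagMap n (d + e) = diagMap n d + diagMap n e :=
  LinearMap.ext fun w => funext fun i => by
    simp only [diagMap_apply, LinearMap.add_apply, Pi.add_apply]; ring

lemma diagMap_smul {n : ℕ} (t : ℝ) (d : Fin n → ℝ) :
    diagMap n (t • d) = t • diagMap n d :=
  LinearMap.ext fun w => funext fun i => by
    simp only [diagMap_apply, LinearMap.smul_apply, Pi.smul_apply, smul_eq_mul]; ring

lemma bcMap_add {n : ℕ} (b c : Module.Basis (Fin n) ℝ (Euc n)) (d e : Fin n → ℝ) :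
    bcMap b c (d + e) = bcMap b c d + bcMap b c e := by
  rw [bcMap, bcMap, bcMap, diagMap_add, LinearMap.add_comp, LinearMap.comp_add]

lemma bcMap_smul {n : ℕ} (b c : Module.Basis (Fin n) ℝ (Euc n)) (t : ℝ) (d : Fin n → ℝ) :
    bcMap b c (t • d) = t • bcMap b c d := by
  rw [bcMap, bcMap, diagMap_smul, LinearMap.smul_comp, LinearMap.comp_smul]

/-- Rank-one collapse: value of `bcMap` for a coefficient vector supported at `i₀`. -/
lemma bcMap_single_apply {n : ℕ} (b c : Module.Basis (Fin n) ℝ (Euc n)) (i₀ : Fin n) (t : ℝ)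
    (v : Euc n) :
    bcMap b c (fun i => if i = i₀ then t else 0) v = (t * c.equivFun v i₀) • b i₀ := by
  rw [bcMap_apply]
  rw [Finset.sum_eq_single i₀]
  · simp
  · intro i _ hi
    simp [hi]
  · intro hmem; exact absurd (Finset.mem_univ i₀) hmem

/-! ### Continuity of `mapBody` along an affine family of linear maps -/

lemma tendsto_mapBody {n : ℕ} (A B : Euc n →ₗ[ℝ] Euc n) (L : ConvexBody (Euc n)) :
    Tendsto (fun k : ℕ => mapBody (A + (1 / ((k : ℝ) + 1)) • B) L) atTop
      (𝓝 (mapBody A L)) := by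
  obtain ⟨C, hC⟩ :=
    ((L.isCompact.image B.continuous_of_finiteDimensional).isBounded).exists_norm_le
  have hC0 : 0 ≤ C := by
    obtain ⟨v, hv⟩ := L.nonempty
    exact le_trans (norm_nonneg _) (hC _ (Set.mem_image_of_mem _ hv))
  rw [tendsto_iff_dist_tendsto_zero]
  have hbound : ∀ k : ℕ,
      dist (mapBody (A + (1 / ((k : ℝ) + 1)) • B) L) (mapBody A L)
        ≤ (1 / ((k : ℝ) + 1)) * C := by
    intro k
    have hε : (0 : ℝ) < 1 / ((k : ℝ) + 1) := by positivity
    rw [← ConvexBody.hausdorffDist_coe]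
    have hdist : ∀ v : Euc n, v ∈ (L : Set (Euc n)) →
        dist ((A + (1 / ((k : ℝ) + 1)) • B) v) (A v) ≤ (1 / ((k : ℝ) + 1)) * C := by
      intro v hv
      have heq : (A + (1 / ((k : ℝ) + 1)) • B) v - A v = (1 / ((k : ℝ) + 1)) • B v := by
        simp only [LinearMap.add_apply, LinearMap.smul_apply]; abel
      rw [dist_eq_norm, heq, norm_smul, Real.norm_eq_abs, abs_of_pos hε]
      exact mul_le_mul_of_nonneg_left (hC _ (Set.mem_image_of_mem _ hv)) hε.le
    refine Metric.hausdorffDist_le_of_mem_dist (by positivity) ?_ ?_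
    · rintro y ⟨v, hv, rfl⟩
      exact ⟨A v, ⟨v, hv, rfl⟩, hdist v hv⟩
    · rintro y ⟨v, hv, rfl⟩
      exact ⟨(A + (1 / ((k : ℝ) + 1)) • B) v, ⟨v, hv, rfl⟩,
        (dist_comm ((A + (1 / ((k : ℝ) + 1)) • B) v) (A v)) ▸ hdist v hv⟩
  refine squeeze_zero (fun k => dist_nonneg) hbound ?_
  have h := tendsto_one_div_add_atTop_nhds_zero_nat.mul_const C
  simpa using h

/-! ### `Φ` commutes with the degenerate rank-one maps -/

set_option synthInstance.maxHeartbeats 1000000 in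
lemma phi_comm_rank_one {n : ℕ} (hn : 0 < n) (Φ : ConvexBody (Euc n) → ConvexBody (Euc n))
    (hcont : Continuous Φ) (hSL : IsSLEquivariant Φ) (hhom : IsHomogeneousOfDegree Φ 1)
    (b c : Module.Basis (Fin n) ℝ (Euc n)) (i₀ : Fin n) (K : ConvexBody (Euc n)) :
    Φ (mapBody (bcMap b c (fun i => if i = i₀ then bcDelta b c else 0)) K)
      = mapBody (bcMap b c (fun i => if i = i₀ then bcDelta b c else 0)) (Φ K) := by
  set Δ := bcDelta b c with hΔdef
  have hΔ : Δ ≠ 0 := bcDelta_ne_zero b c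
  set d0 : Fin n → ℝ := fun i => if i = i₀ then Δ else 0 with hd0
  set κ : Fin n → ℝ := fun i => if i = i₀ then 0 else 1 with hκ
  set Bm := bcMap b c κ with hBm
  set A₀ := bcMap b c d0 with hA₀
  have hsplit : ∀ t : ℝ, bcMap b c (fun i => if i = i₀ then Δ else t) = A₀ + t • Bm := by
    intro t
    rw [hA₀, hBm, ← bcMap_smul, ← bcMap_add]
    congr 1
    funext i
    by_cases h : i = i₀ <;> simp [hd0, hκ, h]
  set dd : ℕ → Fin n → ℝ := fun k i => if i = i₀ then Δ else 1 / ((k : ℝ) + 1) with hdd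
  have hddne : ∀ k i, dd k i ≠ 0 := by
    intro k i
    by_cases h : i = i₀
    · simp [hdd, h, hΔ]
    · simp only [hdd, h, if_false]
      positivity
  have hdet : ∀ k, 0 < LinearMap.det (bcMap b c (dd k)) := by
    intro k
    rw [det_bcMap]
    have hupdate : dd k = Function.update (fun _ => 1 / ((k : ℝ) + 1)) i₀ Δ := by
      funext i
      by_cases h : i = i₀ <;> simp [hdd, Function.update, h]
    rw [hupdate, Finset.prod_update_of_mem (Finset.mem_univ i₀), Finset.prod_const, ← hΔdef]
    have h1 : (0 : ℝ) < (1 / ((k : ℝ) + 1)) ^ (Finset.univ \ {i₀}).card := by positivity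
    have h2 : Δ * (1 / ((k : ℝ) + 1)) ^ (Finset.univ \ {i₀}).card * Δ
        = (Δ * Δ) * (1 / ((k : ℝ) + 1)) ^ (Finset.univ \ {i₀}).card := by ring
    rw [h2]
    exact mul_pos (mul_self_pos.2 hΔ) h1
  have hEq : ∀ k, Φ (mapBody (bcMap b c (dd k)) K) = mapBody (bcMap b c (dd k)) (Φ K) := by
    intro k
    have h := gl_equivariant hn Φ hSL hhom (bcEquiv b c (dd k) (hddne k))
      (by rw [bcEquiv_coe]; exact hdet k) K
    rwa [bcEquiv_coe] at h
  have hfun : ∀ k : ℕ, bcMap b c (dd k) = A₀ + (1 / ((k : ℝ) + 1)) • Bm := fun k => hsplit _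
  have h1 : Tendsto (fun k : ℕ => mapBody (bcMap b c (dd k)) K) atTop (𝓝 (mapBody A₀ K)) := by
    refine (tendsto_mapBody A₀ Bm K).congr fun k => ?_
    rw [hfun k]
  have h2 : Tendsto (fun k : ℕ => mapBody (bcMap b c (dd k)) (Φ K)) atTop
      (𝓝 (mapBody A₀ (Φ K))) := by
    refine (tendsto_mapBody A₀ Bm (Φ K)).congr fun k => ?_
    rw [hfun k]
  have h3 : Tendsto (fun k : ℕ => Φ (mapBody (bcMap b c (dd k)) K)) atTop
      (𝓝 (Φ (mapBody A₀ K))) := (hcont.tendsto _).comp h1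
  exact tendsto_nhds_unique (h3.congr hEq) h2

/-! ### Segments on the line `ℝ x` -/

def segX {n : ℕ} (x : Euc n) (a b : ℝ) (hab : a ≤ b) : ConvexBody (Euc n) :=
  ⟨(LinearMap.toSpanSingleton ℝ (Euc n) x) '' Set.Icc a b,
    (convex_Icc a b).linear_image _,
    isCompact_Icc.image (LinearMap.toSpanSingleton ℝ (Euc n) x).continuous_of_finiteDimensional,
    ⟨_, Set.mem_image_of_mem _ (Set.left_mem_Icc.2 hab)⟩⟩

lemma segX_coe {n : ℕ} (x : Euc n) (a b : ℝ) (hab : a ≤ b) :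
    (segX x a b hab : Set (Euc n)) = (fun t : ℝ => t • x) '' Set.Icc a b := by
  rfl

lemma segX_congr {n : ℕ} (x : Euc n) {a b a' b' : ℝ} (hab : a ≤ b) (h1 : a = a')
    (h2 : b = b') : segX x a b hab = segX x a' b' (h1 ▸ h2 ▸ hab) := by
  subst h1; subst h2; rfl

lemma image_mul_Icc {c a b : ℝ} (hc : 0 < c) :
    (fun t : ℝ => c * t) '' Set.Icc a b = Set.Icc (c * a) (c * b) := by
  ext s
  constructor
  · rintro ⟨t, ⟨h1, h2⟩, rfl⟩
    exact ⟨mul_le_mul_of_nonneg_left h1 hc.le, mul_le_mul_of_nonneg_left h2 hc.le⟩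
  · rintro ⟨h1, h2⟩
    refine ⟨s / c, ⟨?_, ?_⟩, by field_simp⟩
    · rw [le_div_iff₀ hc]; linarith
    · rw [div_le_iff₀ hc]; linarith

lemma segX_smul {n : ℕ} (x : Euc n) (c : ℝ) (hc : 0 < c) (a b : ℝ) (hab : a ≤ b) :
    c • segX x a b hab = segX x (c * a) (c * b) (mul_le_mul_of_nonneg_left hab hc.le) := by
  refine ConvexBody.ext ?_
  rw [coe_smul_body, segX_coe, segX_coe, ← Set.image_smul, Set.image_image]
  rw [show (fun t : ℝ => c • (t • x)) = ((fun t : ℝ => t • x) ∘ (fun t : ℝ => c * t)) from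
    funext fun t => by simp [Function.comp, smul_smul]]
  rw [Set.image_comp, image_mul_Icc hc]

lemma segX_self_eq_pt {n : ℕ} (x : Euc n) (a : ℝ) :
    segX x a a le_rfl = ptBody (a • x) := by
  refine ConvexBody.ext ?_
  rw [segX_coe]
  show _ = ({a • x} : Set (Euc n))
  rw [Set.Icc_self, Set.image_singleton]

lemma segX_zero_one {n : ℕ} (x : Euc n) : segX x 0 1 zero_le_one = segBody x := by
  refine ConvexBody.ext ?_
  rw [segX_coe]
  show _ = convexHull ℝ {0, x}
  rw [convexHull_pair, segment_eq_image ℝ (0 : Euc n) x]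
  apply Set.image_congr
  intro t _
  simp

/-! ### An orthonormal basis whose zeroth vector is given -/

lemma exists_on_basis {n : ℕ} (hn : 0 < n) (v : Euc n) (hv : v ≠ 0) :
    ∃ b : OrthonormalBasis (Fin n) ℝ (Euc n), b ⟨0, hn⟩ = ‖v‖⁻¹ • v := by
  have hnorm : ‖((‖v‖⁻¹ : ℝ) • v : Euc n)‖ = 1 := norm_smul_inv_norm hv
  have horth : Orthonormal ℝ
      (Set.restrict {(⟨0, hn⟩ : Fin n)} (fun _ : Fin n => (‖v‖⁻¹ : ℝ) • v)) := by
    constructor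
    · rintro ⟨i, hi⟩
      exact hnorm
    · rintro ⟨i, hi⟩ ⟨j, hj⟩ hij
      exact absurd (Subtype.ext ((Set.mem_singleton_iff.1 hi).trans
        (Set.mem_singleton_iff.1 hj).symm)) hij
  obtain ⟨b, hb⟩ := horth.exists_orthonormalBasis_extension_of_card_eq (by simp)
  exact ⟨b, hb _ (Set.mem_singleton _)⟩

/-! ### An `SL` map sending `x` to `-x` -/

lemma exists_neg_map {n : ℕ} (hn2 : 2 ≤ n) (x : Euc n) (hx : x ≠ 0) :
    ∃ φ : Euc n ≃ₗ[ℝ] Euc n, LinearMap.det (φ : Euc n →ₗ[ℝ] Euc n) = 1 ∧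
      ∀ t : ℝ, φ (t • x) = (-t) • x := by
  have hn : 0 < n := by omega
  obtain ⟨b, hb⟩ := exists_on_basis hn x hx
  set i₀ : Fin n := ⟨0, hn⟩ with hi₀
  set i₁ : Fin n := ⟨1, by omega⟩ with hi₁
  have hne : i₁ ≠ i₀ := by simp [hi₀, hi₁, Fin.ext_iff]
  set d : Fin n → ℝ := fun i => if i = i₀ then -1 else if i = i₁ then -1 else 1 with hd
  have hdne : ∀ i, d i ≠ 0 := by
    intro i
    by_cases h : i = i₀ <;> by_cases h' : i = i₁ <;> simp [hd, h, h']
  have hxnorm : ‖x‖ ≠ 0 := norm_ne_zero_iff.2 hx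
  have hx0 : x = ‖x‖ • b.toBasis i₀ := by
    rw [OrthonormalBasis.coe_toBasis, hb, smul_smul, mul_inv_cancel₀ hxnorm, one_smul]
  refine ⟨bcEquiv b.toBasis b.toBasis d hdne, ?_, ?_⟩
  · have hcoe : ((bcEquiv b.toBasis b.toBasis d hdne : Euc n ≃ₗ[ℝ] Euc n) :
        Euc n →ₗ[ℝ] Euc n) = bcMap b.toBasis b.toBasis d := bcEquiv_coe _ _ _ _
    rw [hcoe, det_bcMap]
    have hDelta : bcDelta b.toBasis b.toBasis = 1 := by
      rw [bcDelta]
      have hcompid : (b.toBasis.equivFun : Euc n →ₗ[ℝ] (Fin n → ℝ)) ∘ₗ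
          (b.toBasis.equivFun.symm : (Fin n → ℝ) →ₗ[ℝ] Euc n) = LinearMap.id := by
        refine LinearMap.ext fun w => ?_
        simp
      rw [hcompid, LinearMap.det_id]
    rw [hDelta, mul_one]
    have hupdate : d = Function.update
        (Function.update (fun _ : Fin n => (1 : ℝ)) i₀ (-1)) i₁ (-1) := by
      funext i
      by_cases h : i = i₁
      · subst h
        simp [Function.update, hd, hne]
      · by_cases h' : i = i₀ <;> simp [Function.update, hd, h, h']
    rw [hupdate, Finset.prod_update_of_mem (Finset.mem_univ i₁),
      Finset.prod_update_of_mem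
        (Finset.mem_sdiff.2 ⟨Finset.mem_univ i₀, by simp [hne.symm]⟩),
      Finset.prod_const_one]
    norm_num
  · intro t
    have happ : bcEquiv b.toBasis b.toBasis d hdne (t • x)
        = bcMap b.toBasis b.toBasis d (t • x) := rfl
    rw [happ, bcMap_apply]
    have hrepr : ∀ i, b.toBasis.equivFun (t • x) i
        = (t * ‖x‖) * (if i₀ = i then 1 else 0) := by
      intro i
      have htx : (t • x : Euc n) = (t * ‖x‖) • b.toBasis i₀ := by
        conv_lhs => rw [hx0]
        rw [smul_smul]
      rw [htx, _root_.map_smul, Pi.smul_apply, smul_eq_mul, Module.Basis.equivFun_self]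
    have hterm : ∀ i, (d i * b.toBasis.equivFun (t • x) i) • b.toBasis i
        = (if i = i₀ then (-(t * ‖x‖)) • b.toBasis i₀ else 0) := by
      intro i
      rw [hrepr i]
      by_cases h : i = i₀
      · subst h
        simp [hd]
      · have h' : i₀ ≠ i := fun hc => h hc.symm
        simp [h, h']
    rw [Finset.sum_congr rfl (fun i _ => hterm i), Finset.sum_ite_eq' Finset.univ i₀
      (fun _ => (-(t * ‖x‖)) • b.toBasis i₀)]
    simp only [Finset.mem_univ, if_true]
    conv_rhs => rw [hx0]
    rw [smul_smul]
    congr 1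
    ring

/-! ### The two valuations agree on all segments of the line `ℝ x` -/

lemma line_lemma {n : ℕ} (hn : 3 ≤ n)
    (Φ₁ Φ₂ : ConvexBody (Euc n) → ConvexBody (Euc n))
    (hval₁ : IsMinkowskiValuation Φ₁) (hSL₁ : IsSLEquivariant Φ₁)
    (hhom₁ : IsHomogeneousOfDegree Φ₁ 1)
    (hval₂ : IsMinkowskiValuation Φ₂) (hSL₂ : IsSLEquivariant Φ₂)
    (hhom₂ : IsHomogeneousOfDegree Φ₂ 1)
    (x : Euc n) (hx : x ≠ 0)
    (hpt : Φ₁ (ptBody x) = Φ₂ (ptBody x)) (hseg : Φ₁ (segBody x) = Φ₂ (segBody x)) :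
    ∀ (a b : ℝ) (hab : a ≤ b), Φ₁ (segX x a b hab) = Φ₂ (segX x a b hab) := by
  obtain ⟨ν, hνdet, hνx⟩ := exists_neg_map (by omega) x hx
  have hinj : Function.Injective fun t : ℝ => t • x := smul_left_injective ℝ hx
  -- action of ν on the segments of the line
  have hνseg : ∀ (a b : ℝ) (hab : a ≤ b),
      mapBody (ν : Euc n →ₗ[ℝ] Euc n) (segX x a b hab)
        = segX x (-b) (-a) (neg_le_neg hab) := by
    intro a b hab
    refine ConvexBody.ext ?_
    rw [mapBody_coe, segX_coe, segX_coe, Set.image_image]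
    have hfun : ∀ t : ℝ, (ν : Euc n →ₗ[ℝ] Euc n) (t • x) = (-t) • x := fun t => hνx t
    have hneg : (fun t : ℝ => (ν : Euc n →ₗ[ℝ] Euc n) (t • x))
        = (fun t : ℝ => t • x) ∘ (fun t : ℝ => -t) := by
      funext t; simp [Function.comp, hfun t]
    have hIcc : (fun t : ℝ => -t) '' Set.Icc a b = Set.Icc (-b) (-a) := by
      ext s
      constructor
      · rintro ⟨t, ⟨h1, h2⟩, rfl⟩
        exact ⟨neg_le_neg h2, neg_le_neg h1⟩
      · rintro ⟨h1, h2⟩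
        exact ⟨-s, ⟨by linarith, by linarith⟩, by ring⟩
    rw [hneg, Set.image_comp, hIcc]
  -- transfer along ν
  have htrans : ∀ (a b : ℝ) (hab : a ≤ b),
      Φ₁ (segX x (-b) (-a) (neg_le_neg hab)) = Φ₂ (segX x (-b) (-a) (neg_le_neg hab)) →
      Φ₁ (segX x a b hab) = Φ₂ (segX x a b hab) := by
    intro a b hab h
    have hmap : mapBody (ν : Euc n →ₗ[ℝ] Euc n) (segX x (-b) (-a) (neg_le_neg hab))
        = segX x a b hab := by
      rw [hνseg]
      exact segX_congr x _ (neg_neg a) (neg_neg b)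
    calc Φ₁ (segX x a b hab)
        = Φ₁ (mapBody (ν : Euc n →ₗ[ℝ] Euc n) (segX x (-b) (-a) (neg_le_neg hab))) := by
          rw [hmap]
      _ = mapBody (ν : Euc n →ₗ[ℝ] Euc n) (Φ₁ (segX x (-b) (-a) (neg_le_neg hab))) :=
          hSL₁ ν hνdet _
      _ = mapBody (ν : Euc n →ₗ[ℝ] Euc n) (Φ₂ (segX x (-b) (-a) (neg_le_neg hab))) := by
          rw [h]
      _ = Φ₂ (mapBody (ν : Euc n →ₗ[ℝ] Euc n) (segX x (-b) (-a) (neg_le_neg hab))) :=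
          (hSL₂ ν hνdet _).symm
      _ = Φ₂ (segX x a b hab) := by rw [hmap]
  -- the degenerate segment {0}
  have h00 : Φ₁ (segX x 0 0 le_rfl) = Φ₂ (segX x 0 0 le_rfl) := by
    have hcar : (segX x 0 0 le_rfl : Set (Euc n)) = {0} := by
      rw [segX_coe, Set.Icc_self, Set.image_singleton, zero_smul]
    exact ConvexBody.ext (by
      rw [phi_zero_body Φ₁ hhom₁ _ hcar, phi_zero_body Φ₂ hhom₂ _ hcar])
  -- the point bodies
  have hpt1 : segX x 1 1 le_rfl = ptBody x := by
    rw [segX_self_eq_pt]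
    exact congrArg ptBody (one_smul ℝ x)
  have hpts : ∀ a : ℝ, Φ₁ (segX x a a le_rfl) = Φ₂ (segX x a a le_rfl) := by
    have hpos : ∀ a : ℝ, 0 < a → Φ₁ (segX x a a le_rfl) = Φ₂ (segX x a a le_rfl) := by
      intro a ha
      have he : a • segX x 1 1 le_rfl = segX x a a le_rfl := by
        rw [segX_smul x a ha 1 1 le_rfl]
        exact segX_congr x _ (mul_one a) (mul_one a)
      calc Φ₁ (segX x a a le_rfl) = Φ₁ (a • segX x 1 1 le_rfl) := by rw [he]
        _ = a ^ (1 : ℝ) • Φ₁ (segX x 1 1 le_rfl) := hhom₁ a ha _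
        _ = a ^ (1 : ℝ) • Φ₂ (segX x 1 1 le_rfl) := by rw [hpt1, hpt]
        _ = Φ₂ (a • segX x 1 1 le_rfl) := (hhom₂ a ha _).symm
        _ = Φ₂ (segX x a a le_rfl) := by rw [he]
    intro a
    rcases lt_trichotomy a 0 with h | h | h
    · refine htrans a a le_rfl ?_
      exact hpos (-a) (by linarith)
    · subst h; exact h00
    · exact hpos a h
  -- segments [0, b] with 0 ≤ b
  have hseg0 : ∀ (b : ℝ) (hb : 0 ≤ b), Φ₁ (segX x 0 b hb) = Φ₂ (segX x 0 b hb) := by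
    intro b hb
    rcases eq_or_lt_of_le hb with h | h
    · subst h; exact h00
    · have he : b • segX x 0 1 zero_le_one = segX x 0 b hb := by
        rw [segX_smul x b h 0 1 zero_le_one]
        exact segX_congr x _ (mul_zero b) (mul_one b)
      calc Φ₁ (segX x 0 b hb) = Φ₁ (b • segX x 0 1 zero_le_one) := by rw [he]
        _ = b ^ (1 : ℝ) • Φ₁ (segX x 0 1 zero_le_one) := hhom₁ b h _
        _ = b ^ (1 : ℝ) • Φ₂ (segX x 0 1 zero_le_one) := by rw [segX_zero_one, hseg]
        _ = Φ₂ (b • segX x 0 1 zero_le_one) := (hhom₂ b h _).symm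
        _ = Φ₂ (segX x 0 b hb) := by rw [he]
  -- segments [a, 0] with a ≤ 0
  have hsegneg : ∀ (a : ℝ) (ha : a ≤ 0), Φ₁ (segX x a 0 ha) = Φ₂ (segX x a 0 ha) := by
    intro a ha
    refine htrans a 0 ha ?_
    have h0 : Φ₁ (segX x 0 (-a) (by linarith)) = Φ₂ (segX x 0 (-a) (by linarith)) :=
      hseg0 (-a) (by linarith)
    calc Φ₁ (segX x (-0) (-a) (neg_le_neg ha))
        = Φ₁ (segX x 0 (-a) (by linarith)) := by rw [segX_congr x _ neg_zero rfl]
      _ = Φ₂ (segX x 0 (-a) (by linarith)) := h0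
      _ = Φ₂ (segX x (-0) (-a) (neg_le_neg ha)) := by rw [segX_congr x _ neg_zero rfl]
  -- segments [a, b] with 0 ≤ a ≤ b
  have hsegpos : ∀ (a b : ℝ) (h0 : 0 ≤ a) (hab : a ≤ b),
      Φ₁ (segX x a b hab) = Φ₂ (segX x a b hab) := by
    intro a b h0 hab
    set K := segX x 0 a h0 with hK
    set L := segX x a b hab with hL
    set M := segX x 0 b (le_trans h0 hab) with hM
    set N := segX x a a le_rfl with hN
    have hMcoe : (M : Set (Euc n)) = (K : Set (Euc n)) ∪ (L : Set (Euc n)) := by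
      rw [hK, hL, hM, segX_coe, segX_coe, segX_coe, ← Set.image_union,
        Set.Icc_union_Icc_eq_Icc h0 hab]
    have hNcoe : (N : Set (Euc n)) = (K : Set (Euc n)) ∩ (L : Set (Euc n)) := by
      rw [hK, hL, hN, segX_coe, segX_coe, segX_coe, ← Set.image_inter hinj,
        Set.Icc_inter_Icc, sup_eq_right.2 h0, inf_eq_left.2 hab]
    have val₁ := hval₁ K L M N hMcoe hNcoe
    have val₂ := hval₂ K L M N hMcoe hNcoe
    have eK : Φ₁ K = Φ₂ K := hseg0 a h0
    have eM : Φ₁ M = Φ₂ M := hseg0 b (le_trans h0 hab)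
    have eN : Φ₁ N = Φ₂ N := hpts a
    refine body_add_right_cancel (C := Φ₁ K) ?_
    calc Φ₁ L + Φ₁ K = Φ₁ K + Φ₁ L := add_comm _ _
      _ = Φ₁ M + Φ₁ N := val₁
      _ = Φ₂ M + Φ₂ N := by rw [eM, eN]
      _ = Φ₂ K + Φ₂ L := val₂.symm
      _ = Φ₂ L + Φ₂ K := add_comm _ _
      _ = Φ₂ L + Φ₁ K := by rw [eK]
  -- the general case
  intro a b hab
  rcases le_or_gt 0 a with h0a | h0a
  · exact hsegpos a b h0a hab
  rcases le_or_gt b 0 with hb0 | hb0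
  · refine htrans a b hab ?_
    exact hsegpos (-b) (-a) (by linarith) (neg_le_neg hab)
  -- mixed case : a < 0 < b
  have ha0 : a ≤ 0 := h0a.le
  have h0b : (0 : ℝ) ≤ b := hb0.le
  set K := segX x a 0 ha0 with hK
  set L := segX x 0 b h0b with hL
  set M := segX x a b hab with hM
  set N := segX x 0 0 le_rfl with hN
  have hMcoe : (M : Set (Euc n)) = (K : Set (Euc n)) ∪ (L : Set (Euc n)) := by
    rw [hK, hL, hM, segX_coe, segX_coe, segX_coe, ← Set.image_union,
      Set.Icc_union_Icc_eq_Icc ha0 h0b]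
  have hNcoe : (N : Set (Euc n)) = (K : Set (Euc n)) ∩ (L : Set (Euc n)) := by
    rw [hK, hL, hN, segX_coe, segX_coe, segX_coe, ← Set.image_inter hinj,
      Set.Icc_inter_Icc, sup_eq_right.2 ha0, inf_eq_left.2 h0b]
  have val₁ := hval₁ K L M N hMcoe hNcoe
  have val₂ := hval₂ K L M N hMcoe hNcoe
  have eK : Φ₁ K = Φ₂ K := hsegneg a ha0
  have eL : Φ₁ L = Φ₂ L := hseg0 b h0b
  have eN : Φ₁ N = Φ₂ N := h00
  refine body_add_right_cancel (C := Φ₁ N) ?_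
  calc Φ₁ M + Φ₁ N = Φ₁ K + Φ₁ L := val₁.symm
    _ = Φ₂ K + Φ₂ L := by rw [eK, eL]
    _ = Φ₂ M + Φ₂ N := val₂
    _ = Φ₂ M + Φ₁ N := by rw [eN]

/-! ### The main inclusion -/

set_option synthInstance.maxHeartbeats 1000000 in
lemma main_subset {n : ℕ} (hn : 3 ≤ n)
    (Φ₁ Φ₂ : ConvexBody (Euc n) → ConvexBody (Euc n))
    (hcont₁ : Continuous Φ₁) (hval₁ : IsMinkowskiValuation Φ₁) (hSL₁ : IsSLEquivariant Φ₁)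
    (hhom₁ : IsHomogeneousOfDegree Φ₁ 1)
    (hcont₂ : Continuous Φ₂) (hval₂ : IsMinkowskiValuation Φ₂) (hSL₂ : IsSLEquivariant Φ₂)
    (hhom₂ : IsHomogeneousOfDegree Φ₂ 1)
    (x : Euc n) (hx : x ≠ 0)
    (hpt : Φ₁ (ptBody x) = Φ₂ (ptBody x)) (hseg : Φ₁ (segBody x) = Φ₂ (segBody x))
    (K : ConvexBody (Euc n)) : (Φ₁ K : Set (Euc n)) ⊆ (Φ₂ K : Set (Euc n)) := by
  intro y hy
  by_contra hyn
  obtain ⟨f, s, hfs, hsy⟩ :=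
    geometric_hahn_banach_closed_point (Φ₂ K).convex (Φ₂ K).isClosed hyn
  set u : Euc n := (InnerProductSpace.toDual ℝ (Euc n)).symm f with hu
  have hinner : ∀ v : Euc n, ⟪u, v⟫ = f v := fun v => InnerProductSpace.toDual_symm_apply
  have hu0 : u ≠ 0 := by
    intro h0
    obtain ⟨w, hw⟩ := (Φ₂ K).nonempty
    have h1 : f w < s := hfs w hw
    have hfy : f y = 0 := by rw [← hinner y, h0, inner_zero_left]
    have hfw : f w = 0 := by rw [← hinner w, h0, inner_zero_left]
    linarith [hsy]
  have hn0 : 0 < n := by omega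
  obtain ⟨b, hb⟩ := exists_on_basis hn0 x hx
  obtain ⟨c, hc⟩ := exists_on_basis hn0 u hu0
  set i₀ : Fin n := ⟨0, hn0⟩ with hi₀
  set Δ := bcDelta b.toBasis c.toBasis with hΔ
  have hΔ0 : Δ ≠ 0 := bcDelta_ne_zero _ _
  set d0 : Fin n → ℝ := fun i => if i = i₀ then Δ else 0 with hd0
  set A₀ := bcMap b.toBasis c.toBasis d0 with hA₀
  have hxn : ‖x‖ ≠ 0 := norm_ne_zero_iff.2 hx
  have hun : ‖u‖ ≠ 0 := norm_ne_zero_iff.2 hu0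
  -- formula for `A₀`
  have happly : ∀ v : Euc n,
      A₀ v = ((Δ * ‖x‖⁻¹) * c.toBasis.equivFun v i₀) • x := by
    intro v
    rw [hA₀, hd0, bcMap_single_apply]
    have hb' : b.toBasis i₀ = ‖x‖⁻¹ • x := by
      rw [OrthonormalBasis.coe_toBasis, hb]
    rw [hb', smul_smul, mul_right_comm]
  -- the coefficient functional
  set glin : Euc n →ₗ[ℝ] ℝ := (Δ * ‖x‖⁻¹) •
    ((LinearMap.proj i₀ : (Fin n → ℝ) →ₗ[ℝ] ℝ) ∘ₗ
      (c.toBasis.equivFun : Euc n →ₗ[ℝ] (Fin n → ℝ))) with hglin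
  have hg : ∀ v : Euc n, glin v = (Δ * ‖x‖⁻¹) * c.toBasis.equivFun v i₀ := fun v => rfl
  set S : Set ℝ := glin '' (K : Set (Euc n)) with hS
  have hS_ne : S.Nonempty := K.nonempty.image _
  have hS_cp : IsCompact S := K.isCompact.image glin.continuous_of_finiteDimensional
  have hS_cn : IsConnected S :=
    ⟨hS_ne, (K.convex.linear_image glin).isPreconnected⟩
  have hIcc : S = Set.Icc (sInf S) (sSup S) := eq_Icc_of_connected_compact hS_cn hS_cp
  obtain ⟨s₀, hs₀⟩ := hS_ne
  have hab : sInf S ≤ sSup S :=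
    le_trans (csInf_le hS_cp.bddBelow hs₀) (le_csSup hS_cp.bddAbove hs₀)
  -- the image of `K` under `A₀` is a line segment
  have hbody : mapBody A₀ K = segX x (sInf S) (sSup S) hab := by
    refine ConvexBody.ext ?_
    rw [mapBody_coe, segX_coe, ← hIcc, hS, Set.image_image]
    apply Set.image_congr
    intro v _
    rw [happly v, hg v]
  -- `Φᵢ` commute with `A₀`
  have comm₁ := phi_comm_rank_one hn0 Φ₁ hcont₁ hSL₁ hhom₁ b.toBasis c.toBasis i₀ K
  have comm₂ := phi_comm_rank_one hn0 Φ₂ hcont₂ hSL₂ hhom₂ b.toBasis c.toBasis i₀ K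
  rw [← hΔ, ← hd0, ← hA₀] at comm₁ comm₂
  -- `Φ₁` and `Φ₂` agree on segments of the line
  have eq_line : Φ₁ (mapBody A₀ K) = Φ₂ (mapBody A₀ K) := by
    rw [hbody]
    exact line_lemma hn Φ₁ Φ₂ hval₁ hSL₁ hhom₁ hval₂ hSL₂ hhom₂ x hx hpt hseg
      (sInf S) (sSup S) hab
  have key : mapBody A₀ (Φ₁ K) = mapBody A₀ (Φ₂ K) := by
    rw [← comm₁, ← comm₂]; exact eq_line
  -- conclude
  have hmem : A₀ y ∈ (mapBody A₀ (Φ₂ K) : Set (Euc n)) := by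
    rw [← key, mapBody_coe]
    exact Set.mem_image_of_mem _ hy
  rw [mapBody_coe] at hmem
  obtain ⟨w, hw, heq⟩ := hmem
  rw [happly w, happly y] at heq
  have hcoefeq : (Δ * ‖x‖⁻¹) * c.toBasis.equivFun w i₀
      = (Δ * ‖x‖⁻¹) * c.toBasis.equivFun y i₀ := smul_left_injective ℝ hx heq
  have hmul0 : (Δ * ‖x‖⁻¹) ≠ 0 := mul_ne_zero hΔ0 (inv_ne_zero hxn)
  have hee : c.toBasis.equivFun w i₀ = c.toBasis.equivFun y i₀ :=
    mul_left_cancel₀ hmul0 hcoefeq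
  have hcoef : ∀ v : Euc n, c.toBasis.equivFun v i₀ = ‖u‖⁻¹ * f v := by
    intro v
    rw [Module.Basis.equivFun_apply, OrthonormalBasis.coe_toBasis_repr_apply,
      OrthonormalBasis.repr_apply_apply, hc, real_inner_smul_left, hinner v]
  rw [hcoef w, hcoef y] at hee
  have hfwy : f w = f y := mul_left_cancel₀ (inv_ne_zero hun) hee
  have h1 : f w < s := hfs w hw
  linarith [hsy, h1, hfwy.ge]

end Lemma5Aux

/-- **Lemma 5**: two `1`-homogeneous `SL(n)` equivariant continuous Minkowski valuations
agreeing on a point `{x}` and the segment `[0, x]` for some `x ≠ 0` coincide. -/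
theorem Minkowski_valuations_eq_of_eq_on_point_and_segment
    (n : ℕ) (hn : 3 ≤ n) (Φ₁ Φ₂ : ConvexBody (Euc n) → ConvexBody (Euc n))
    (hcont₁ : Continuous Φ₁) (hval₁ : IsMinkowskiValuation Φ₁) (hSL₁ : IsSLEquivariant Φ₁)
    (hhom₁ : IsHomogeneousOfDegree Φ₁ 1)
    (hcont₂ : Continuous Φ₂) (hval₂ : IsMinkowskiValuation Φ₂) (hSL₂ : IsSLEquivariant Φ₂)
    (hhom₂ : IsHomogeneousOfDegree Φ₂ 1)
    (x : Euc n) (hx : x ≠ 0)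
    (hpt : Φ₁ (ptBody x) = Φ₂ (ptBody x)) (hseg : Φ₁ (segBody x) = Φ₂ (segBody x)) :
    Φ₁ = Φ₂ := by
  funext K
  apply ConvexBody.ext
  apply Set.Subset.antisymm
  · exact Lemma5Aux.main_subset hn Φ₁ Φ₂ hcont₁ hval₁ hSL₁ hhom₁ hcont₂ hval₂ hSL₂ hhom₂
      x hx hpt hseg K
  · exact Lemma5Aux.main_subset hn Φ₂ Φ₁ hcont₂ hval₂ hSL₂ hhom₂ hcont₁ hval₁ hSL₁ hhom₁
      x hx hpt.symm hseg.symm K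

end
end

section
/- Let n ≥ 3. There do not exist constants a₁, a₂ ∈ ℝ and a₃, a₄ ≥ 0 such that M_* K = a₁ m(K) + a₂ m(K_o) + a₃ M K + a₄ M(K_o) for every K ∈ 𝒦^n. In particular, if a₁ m(K) + a₂ m(K_o) + a₃ M K + a₄ M(K_o) = {0} for every convex body K containing the origin, with a₃, a₄ ≥ 0, then a₃ = a₄ = 0. -/
open scoped RealInnerProductSpace Pointwise NNReal
open MeasureTheory

noncomputable section

variable {n : ℕ}

/-! ### Auxiliary lemmas for the proof -/

lemma myBodyO_eq_self {K : ConvexBody (Euc n)} (h : (0 : Euc n) ∈ (K : Set (Euc n))) :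
    bodyO K = K := by
  apply SetLike.coe_injective
  show convexHull ℝ (insert (0 : Euc n) (K : Set (Euc n))) = (K : Set (Euc n))
  rw [Set.insert_eq_self.mpr h, K.convex.convexHull_eq]

lemma myMomentSupp_neg (K : ConvexBody (Euc n)) (x : Euc n) :
    momentSupp K (-x) = momentSupp K x := by
  simp only [momentSupp, inner_neg_left, abs_neg]

lemma myMomentSuppStar_neg (K : ConvexBody (Euc n)) (x : Euc n) :
    momentSuppStar K (-x) = momentSuppStar K x := by
  simp only [momentSuppStar, inner_neg_left, abs_neg]

lemma myMomentSuppStar_eq_zero {K : ConvexBody (Euc n)}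
    (h : (0 : Euc n) ∈ (K : Set (Euc n))) (x : Euc n) : momentSuppStar K x = 0 := by
  rw [momentSuppStar, myBodyO_eq_self h, Set.diff_self, Measure.restrict_empty,
    integral_zero_measure]

lemma myIntegralPos {e : Euc n} (he : ‖e‖ = 1) {s : Set (Euc n)}
    (hs : IntegrableOn (fun y => |⟪e, y⟫|) s)
    (hsub : Metric.ball ((2:ℝ) • e) (1/2) ⊆ s) :
    0 < ∫ y in s, |⟪e, y⟫| := by
  rw [setIntegral_pos_iff_support_of_nonneg_ae (ae_of_all _ fun y => abs_nonneg _) hs]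
  have hball : Metric.ball ((2:ℝ) • e) (1/2) ⊆ Function.support (fun y => |⟪e, y⟫|) ∩ s := by
    intro y hy
    refine ⟨?_, hsub hy⟩
    have hdist : ‖y - (2:ℝ) • e‖ < 1/2 := by
      rw [← dist_eq_norm]; exact Metric.mem_ball.1 hy
    have h1 : |⟪e, y - (2:ℝ) • e⟫| ≤ ‖e‖ * ‖y - (2:ℝ) • e‖ := abs_real_inner_le_norm _ _
    have h2 : ⟪e, y⟫ = ⟪e, y - (2:ℝ) • e⟫ + 2 := by
      rw [inner_sub_right, real_inner_smul_right, real_inner_self_eq_norm_sq, he]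
      ring
    have : (0:ℝ) < ⟪e, y⟫ := by rw [h2]; rw [he, one_mul] at h1; cases abs_le.1 h1; linarith
    simp only [Function.mem_support]
    positivity
  exact lt_of_lt_of_le (Metric.measure_ball_pos _ _ (by norm_num)) (measure_mono hball)

lemma myContAbsInner (e : Euc n) : Continuous fun y : Euc n => |⟪e, y⟫| :=
  (continuous_const.inner continuous_id).abs

/-- `M_*` cannot be written as a linear combination of `m`, `m ∘ (·)_o`, `M` and
`M ∘ (·)_o`; in particular, if such a combination vanishes on all bodies containing the
origin then `a₃ = a₄ = 0`. -/
theorem Mstar_not_combination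
    (n : ℕ) (hn : 3 ≤ n) :
    (¬ ∃ a₁ a₂ a₃ a₄ : ℝ, 0 ≤ a₃ ∧ 0 ≤ a₄ ∧
      ∀ (K : ConvexBody (Euc n)) (x : Euc n),
        momentSuppStar K x = a₁ * ⟪x, momentVec K⟫ + a₂ * ⟪x, momentVec (bodyO K)⟫
          + a₃ * momentSupp K x + a₄ * momentSupp (bodyO K) x) ∧
    (∀ a₁ a₂ a₃ a₄ : ℝ, 0 ≤ a₃ → 0 ≤ a₄ →
      (∀ K : ConvexBody (Euc n), (0 : Euc n) ∈ (K : Set (Euc n)) → ∀ x : Euc n,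
        a₁ * ⟪x, momentVec K⟫ + a₂ * ⟪x, momentVec (bodyO K)⟫
          + a₃ * momentSupp K x + a₄ * momentSupp (bodyO K) x = 0) →
      a₃ = 0 ∧ a₄ = 0) := by
  have h0n : 0 < n := by omega
  set e : Euc n := EuclideanSpace.single (⟨0, h0n⟩ : Fin n) (1:ℝ) with he_def
  have he : ‖e‖ = 1 := by
    rw [he_def, EuclideanSpace.norm_single, norm_one]
  -- the body `closedBall (2e) 2`, which contains the origin
  set K₂ : ConvexBody (Euc n) :=
    ⟨Metric.closedBall ((2:ℝ) • e) 2, convex_closedBall _ _, isCompact_closedBall _ _,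
      ⟨(2:ℝ) • e, Metric.mem_closedBall_self (by norm_num)⟩⟩ with hK₂_def
  have h0K₂ : (0 : Euc n) ∈ (K₂ : Set (Euc n)) := by
    show (0 : Euc n) ∈ Metric.closedBall ((2:ℝ) • e) 2
    rw [Metric.mem_closedBall, dist_zero_left, norm_smul, he]
    norm_num
  have hbO₂ : bodyO K₂ = K₂ := myBodyO_eq_self h0K₂
  have hSpos : 0 < momentSupp K₂ e := by
    apply myIntegralPos he
    · exact (myContAbsInner e).continuousOn.integrableOn_compact (isCompact_closedBall _ _)
    · exact Metric.ball_subset_closedBall.trans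
        (Metric.closedBall_subset_closedBall (by norm_num))
  have part2 : ∀ a₁ a₂ a₃ a₄ : ℝ, 0 ≤ a₃ → 0 ≤ a₄ →
      (∀ K : ConvexBody (Euc n), (0 : Euc n) ∈ (K : Set (Euc n)) → ∀ x : Euc n,
        a₁ * ⟪x, momentVec K⟫ + a₂ * ⟪x, momentVec (bodyO K)⟫
          + a₃ * momentSupp K x + a₄ * momentSupp (bodyO K) x = 0) →
      a₃ = 0 ∧ a₄ = 0 := by
    intro a₁ a₂ a₃ a₄ h₃ h₄ H
    have E1 := H K₂ h0K₂ e
    have E2 := H K₂ h0K₂ (-e)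
    rw [hbO₂] at E1 E2
    simp only [inner_neg_left, myMomentSupp_neg] at E2
    have hsum : a₃ * momentSupp K₂ e + a₄ * momentSupp K₂ e = 0 := by linarith
    have h3S : a₃ * momentSupp K₂ e = 0 := by
      have := mul_nonneg h₄ hSpos.le
      have := mul_nonneg h₃ hSpos.le
      linarith
    have h4S : a₄ * momentSupp K₂ e = 0 := by linarith
    constructor
    · rcases mul_eq_zero.1 h3S with h | h
      · exact h
      · exact absurd h hSpos.ne'
    · rcases mul_eq_zero.1 h4S with h | h
      · exact h
      · exact absurd h hSpos.ne'
  refine ⟨?_, part2⟩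
  rintro ⟨a₁, a₂, a₃, a₄, h₃, h₄, H⟩
  have hvan : ∀ K : ConvexBody (Euc n), (0 : Euc n) ∈ (K : Set (Euc n)) → ∀ x : Euc n,
      a₁ * ⟪x, momentVec K⟫ + a₂ * ⟪x, momentVec (bodyO K)⟫
        + a₃ * momentSupp K x + a₄ * momentSupp (bodyO K) x = 0 := by
    intro K hK x
    have h := H K x
    rw [myMomentSuppStar_eq_zero hK] at h
    exact h.symm
  obtain ⟨h₃0, h₄0⟩ := part2 a₁ a₂ a₃ a₄ h₃ h₄ hvan
  subst h₃0; subst h₄0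
  -- now `momentSuppStar K x = a₁ ⟪x, m K⟫ + a₂ ⟪x, m K_o⟫`, which is odd in x while
  -- the left side is even, so it vanishes identically
  have hzero : ∀ (K : ConvexBody (Euc n)) (x : Euc n), momentSuppStar K x = 0 := by
    intro K x
    have E1 := H K x
    have E2 := H K (-x)
    simp only [inner_neg_left, myMomentSuppStar_neg] at E2
    simp only [zero_mul, add_zero] at E1 E2
    linarith
  -- a body far from the origin where `momentSuppStar` is positive
  set K₁ : ConvexBody (Euc n) :=
    ⟨Metric.closedBall ((4:ℝ) • e) 1, convex_closedBall _ _, isCompact_closedBall _ _,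
      ⟨(4:ℝ) • e, Metric.mem_closedBall_self (by norm_num)⟩⟩ with hK₁_def
  have hsub : Metric.ball ((2:ℝ) • e) (1/2)
      ⊆ ((bodyO K₁ : Set (Euc n)) \ (K₁ : Set (Euc n))) := by
    intro y hy
    have hdist : ‖y - (2:ℝ) • e‖ < 1/2 := by
      rw [← dist_eq_norm]; exact Metric.mem_ball.1 hy
    constructor
    · show y ∈ convexHull ℝ (insert (0 : Euc n) (K₁ : Set (Euc n)))
      have h2y : (2:ℝ) • y ∈ (K₁ : Set (Euc n)) := by
        show (2:ℝ) • y ∈ Metric.closedBall ((4:ℝ) • e) 1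
        rw [Metric.mem_closedBall, dist_eq_norm]
        have heq : (2:ℝ) • y - (4:ℝ) • e = (2:ℝ) • (y - (2:ℝ) • e) := by module
        rw [heq, norm_smul]
        simp only [Real.norm_ofNat]
        nlinarith
      have h0mem : (0 : Euc n) ∈ convexHull ℝ (insert (0 : Euc n) (K₁ : Set (Euc n))) :=
        subset_convexHull ℝ _ (Set.mem_insert _ _)
      have h2ymem : (2:ℝ) • y ∈ convexHull ℝ (insert (0 : Euc n) (K₁ : Set (Euc n))) :=
        subset_convexHull ℝ _ (Set.mem_insert_of_mem _ h2y)
      have hc := (convex_convexHull ℝ (insert (0 : Euc n) (K₁ : Set (Euc n))))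
        h0mem h2ymem (by norm_num : (0:ℝ) ≤ 1/2) (by norm_num : (0:ℝ) ≤ 1/2) (by norm_num)
      have heq2 : (1/2 : ℝ) • (0 : Euc n) + (1/2 : ℝ) • ((2:ℝ) • y) = y := by module
      rwa [heq2] at hc
    · show y ∉ Metric.closedBall ((4:ℝ) • e) 1
      rw [Metric.mem_closedBall]
      push_neg
      have htri := dist_triangle ((2:ℝ) • e) y ((4:ℝ) • e)
      have hd24 : dist ((2:ℝ) • e) ((4:ℝ) • e) = 2 := by
        rw [dist_eq_norm]
        have heq : (2:ℝ) • e - (4:ℝ) • e = (-2:ℝ) • e := by module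
        rw [heq, norm_smul, he]
        norm_num
      have hd2y : dist ((2:ℝ) • e) y < 1/2 := by
        rw [dist_comm, dist_eq_norm]; exact hdist
      linarith
  have hpos : 0 < momentSuppStar K₁ e := by
    apply myIntegralPos he _ hsub
    exact ((myContAbsInner e).continuousOn.integrableOn_compact
      (bodyO K₁).isCompact).mono_set Set.diff_subset
  exact absurd (hzero K₁ e) hpos.ne'


end
end
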